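/- arXiv:1807.01821 — 12 statements merged into one kernel-verified Lean document; each statement's English description precedes it below -/
import Mathlib

section
/- Let G and H be finite non-abelian groups. If G and H are isoclinic, then the transversal commuting graphs T(G) and T(H) are isomorphic. -/
/-- The commuting graph of a group `G` on a subset `X`. -/
def commGraph (G : Type*) [Group G] (X : Set G) : SimpleGraph X where
  Adj x y := x ≠ y ∧ (x : G) * y = (y : G) * x
  symm := ⟨fun x y ⟨h1, h2⟩ => ⟨h1.symm, h2.symm⟩⟩
  loopless := ⟨fun x ⟨h, _⟩ => h rfl⟩

/-- `T` is a transversal of the center of `G`: each coset of `Z(G)` contains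
exactly one element of `T`. -/
def IsCenterTransversal (G : Type*) [Group G] (T : Set G) : Prop :=
  ∀ g : G, ∃! t, t ∈ T ∧ g⁻¹ * t ∈ Subgroup.center G

/-- The graph `T(G)`: the commuting graph of `G` on `T \ Z(G)`. -/
def TGraph (G : Type*) [Group G] (T : Set G) :
    SimpleGraph ↥(T \ (Subgroup.center G : Set G)) :=
  commGraph G (T \ (Subgroup.center G : Set G))

/-- Strongly regular graph with parameters `(v, k, l, m)` (with `0 < k < v - 1`). -/
def IsSRG {V : Type*} (G : SimpleGraph V) (v k l m : ℕ) : Prop :=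
  Nat.card V = v ∧ 0 < k ∧ k + 1 < v ∧
    (∀ x, (G.neighborSet x).ncard = k) ∧
    (∀ x y, G.Adj x y → (G.neighborSet x ∩ G.neighborSet y).ncard = l) ∧
    (∀ x y, x ≠ y → ¬ G.Adj x y → (G.neighborSet x ∩ G.neighborSet y).ncard = m)

/-- The disjoint union of `m` copies of the complete graph `K_n`. -/
def mKn (m n : ℕ) : SimpleGraph (Fin m × Fin n) where
  Adj x y := x ≠ y ∧ x.1 = y.1
  symm := ⟨fun x y ⟨h1, h2⟩ => ⟨h1.symm, h2.symm⟩⟩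
  loopless := ⟨fun x ⟨h, _⟩ => h rfl⟩

open scoped commutatorElement

theorem commutator_mem_commutatorSubgroup {G : Type*} [Group G] (x y : G) :
    ⁅x, y⁆ ∈ commutator G := by
  rw [commutator_def]
  exact Subgroup.commutator_mem_commutator (Subgroup.mem_top x) (Subgroup.mem_top y)

/-- Isoclinism of groups. -/
def Isoclinic (G H : Type*) [Group G] [Group H] : Prop :=
  ∃ (φ : G ⧸ Subgroup.center G ≃* H ⧸ Subgroup.center H)
    (ψ : commutator G ≃* commutator H),
    ∀ (x y : G) (x' y' : H),
      φ (QuotientGroup.mk x) = QuotientGroup.mk x' →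
      φ (QuotientGroup.mk y) = QuotientGroup.mk y' →
      (ψ ⟨⁅x, y⁆, commutator_mem_commutatorSubgroup x y⟩ : H) = ⁅x', y'⁆

/-- An extraspecial `p`-group: `G' = Z(G) = Φ(G)` and `|Z(G)| = p`. -/
def IsExtraspecial (p : ℕ) (G : Type*) [Group G] : Prop :=
  IsPGroup p G ∧ commutator G = Subgroup.center G ∧
    frattini G = Subgroup.center G ∧ Nat.card (Subgroup.center G) = p

open Pointwise Subgroup


lemma transversal_uniq {G : Type*} [Group G] {T : Set G} (hT : IsCenterTransversal G T)
    {s s' : G} (hs : s ∈ T) (hs' : s' ∈ T)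
    (heq : (QuotientGroup.mk s : G ⧸ Subgroup.center G) = QuotientGroup.mk s') : s = s' := by
  obtain ⟨t, _, ht⟩ := hT s
  have h1 : s = t := ht s ⟨hs, by simpa using (Subgroup.center G).one_mem⟩
  have h2 : s' = t := ht s' ⟨hs', QuotientGroup.eq.mp heq⟩
  rw [h1, h2]

lemma transversal_sel {G : Type*} [Group G] {T : Set G} (hT : IsCenterTransversal G T) :
    ∀ q : G ⧸ Subgroup.center G, ∃ s, s ∈ T ∧ (QuotientGroup.mk s : G ⧸ Subgroup.center G) = q := by
  intro q
  obtain ⟨s, ⟨hsT, hsz⟩, _⟩ := hT q.out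
  refine ⟨s, hsT, ?_⟩
  rw [← QuotientGroup.out_eq' q]
  exact (QuotientGroup.eq.mpr hsz).symm

theorem stmt1 (G H : Type*) [Group G] [Group H] [Finite G] [Finite H]
    (hna : ∃ a b : G, a * b ≠ b * a) (hna' : ∃ a b : H, a * b ≠ b * a)
    (h : Isoclinic G H) (T : Set G) (S : Set H)
    (hT : IsCenterTransversal G T) (hS : IsCenterTransversal H S) :
    Nonempty (TGraph G T ≃g TGraph H S) := by
  classical
  obtain ⟨φ, ψ, hψ⟩ := h
  choose selS hmemS hmkS using transversal_sel hS
  choose selT hmemT hmkT using transversal_sel hT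
  -- key membership facts
  have memS : ∀ t : ↥(T \ (Subgroup.center G : Set G)),
      selS (φ (QuotientGroup.mk t.1)) ∈ S \ (Subgroup.center H : Set H) := by
    intro t
    refine ⟨hmemS _, fun hc => ?_⟩
    have h1 : φ (QuotientGroup.mk t.1) = 1 := by
      rw [← hmkS (φ (QuotientGroup.mk t.1))]
      exact (QuotientGroup.eq_one_iff _).mpr hc
    have h2 : (QuotientGroup.mk t.1 : G ⧸ Subgroup.center G) = 1 :=
      (MulEquiv.map_eq_one_iff φ).mp h1
    exact t.2.2 ((QuotientGroup.eq_one_iff _).mp h2)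
  have memT : ∀ s : ↥(S \ (Subgroup.center H : Set H)),
      selT (φ.symm (QuotientGroup.mk s.1)) ∈ T \ (Subgroup.center G : Set G) := by
    intro s
    refine ⟨hmemT _, fun hc => ?_⟩
    have h1 : φ.symm (QuotientGroup.mk s.1) = 1 := by
      rw [← hmkT (φ.symm (QuotientGroup.mk s.1))]
      exact (QuotientGroup.eq_one_iff _).mpr hc
    have h2 : (QuotientGroup.mk s.1 : H ⧸ Subgroup.center H) = 1 :=
      (MulEquiv.map_eq_one_iff φ.symm).mp h1
    exact s.2.2 ((QuotientGroup.eq_one_iff _).mp h2)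
  refine ⟨⟨⟨fun t => ⟨selS (φ (QuotientGroup.mk t.1)), memS t⟩,
      fun s => ⟨selT (φ.symm (QuotientGroup.mk s.1)), memT s⟩, ?_, ?_⟩, ?_⟩⟩
  · intro t
    apply Subtype.ext
    have hmk : (QuotientGroup.mk (selS (φ (QuotientGroup.mk t.1))) : H ⧸ Subgroup.center H)
        = φ (QuotientGroup.mk t.1) := hmkS _
    dsimp only
    rw [hmk, MulEquiv.symm_apply_apply]
    exact transversal_uniq hT (hmemT _) t.2.1 (hmkT _)
  · intro s
    apply Subtype.ext
    have hmk : (QuotientGroup.mk (selT (φ.symm (QuotientGroup.mk s.1))) : G ⧸ Subgroup.center G)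
        = φ.symm (QuotientGroup.mk s.1) := hmkT _
    dsimp only
    rw [hmk, MulEquiv.apply_symm_apply]
    exact transversal_uniq hS (hmemS _) s.2.1 (hmkS _)
  · intro t₁ t₂
    set s₁ := selS (φ (QuotientGroup.mk t₁.1)) with hs₁
    set s₂ := selS (φ (QuotientGroup.mk t₂.1)) with hs₂
    have hφ₁ : φ (QuotientGroup.mk t₁.1) = QuotientGroup.mk s₁ := (hmkS _).symm
    have hφ₂ : φ (QuotientGroup.mk t₂.1) = QuotientGroup.mk s₂ := (hmkS _).symm
    have hcomm := hψ t₁.1 t₂.1 s₁ s₂ hφ₁ hφ₂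
    constructor
    · rintro ⟨hne, hc⟩
      refine ⟨?_, ?_⟩
      · intro heq
        exact hne (congrArg _ heq)
      · have h1 : ⁅s₁, s₂⁆ = 1 := by
          rw [commutatorElement_eq_one_iff_mul_comm]; exact hc
        have h2 : (ψ ⟨⁅t₁.1, t₂.1⁆, commutator_mem_commutatorSubgroup _ _⟩ : H) = 1 := by
          rw [hcomm, h1]
        have h3 : ψ ⟨⁅t₁.1, t₂.1⁆, commutator_mem_commutatorSubgroup _ _⟩ = 1 :=
          Subtype.ext h2
        have h4 : (⟨⁅t₁.1, t₂.1⁆, commutator_mem_commutatorSubgroup _ _⟩ :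
            commutator G) = 1 := (MulEquiv.map_eq_one_iff ψ).mp h3
        have h5 : ⁅t₁.1, t₂.1⁆ = 1 := congrArg Subtype.val h4
        exact commutatorElement_eq_one_iff_mul_comm.mp h5
    · rintro ⟨hne, hc⟩
      refine ⟨?_, ?_⟩
      · intro heq
        apply hne
        apply Subtype.ext
        have hse : s₁ = s₂ := congrArg Subtype.val heq
        have hq : φ (QuotientGroup.mk t₁.1) = φ (QuotientGroup.mk t₂.1) := by
          rw [hφ₁, hφ₂, hse]
        exact transversal_uniq hT t₁.2.1 t₂.2.1 (φ.injective hq)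
      · have h5 : ⁅t₁.1, t₂.1⁆ = 1 := commutatorElement_eq_one_iff_mul_comm.mpr hc
        have h1 : ⁅s₁, s₂⁆ = 1 := by
          rw [← hcomm]
          have : (⟨⁅t₁.1, t₂.1⁆, commutator_mem_commutatorSubgroup _ _⟩ :
              commutator G) = 1 := Subtype.ext h5
          rw [this, map_one]
          rfl
        exact commutatorElement_eq_one_iff_mul_comm.mp h1
end

section
/- Let G be a finite non-abelian group and let x, y be distinct adjacent vertices of T(G). Then the number of common neighbours of x and y in T(G) equals [C_G(x) ∩ C_G(y) : Z(G)] − 3. -/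
open scoped commutatorElement

open Pointwise Subgroup

theorem stmt3 (G : Type*) [Group G] [Finite G] (hna : ∃ a b : G, a * b ≠ b * a)
    (T : Set G) (hT : IsCenterTransversal G T) (x y : ↥(T \ (Subgroup.center G : Set G))) (hxy : (TGraph G T).Adj x y) :
    ((TGraph G T).neighborSet x ∩ (TGraph G T).neighborSet y).ncard
      = (Subgroup.center G).relIndex
          (Subgroup.centralizer {(x : G)} ⊓ Subgroup.centralizer {(y : G)}) - 3 := by
  classical
  set H := Subgroup.centralizer {(x : G)} ⊓ Subgroup.centralizer {(y : G)} with hH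
  -- the central transversal element
  obtain ⟨t₀, ⟨ht₀T, ht₀Z⟩, ht₀u⟩ := hT 1
  rw [inv_one, one_mul] at ht₀Z
  have hZH : (Subgroup.center G) ≤ H := le_inf (Subgroup.center_le_centralizer _)
    (Subgroup.center_le_centralizer _)
  have hmemH : ∀ g : G, g ∈ H ↔ ((x:G) * g = g * x ∧ (y:G) * g = g * y) := by
    intro g
    simp [hH, Subgroup.mem_inf, Subgroup.mem_centralizer_iff]
  -- x, y, t₀ are in H and in T
  have hxH : (x : G) ∈ H := (hmemH _).2 ⟨rfl, hxy.2.symm⟩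
  have hyH : (y : G) ∈ H := (hmemH _).2 ⟨hxy.2, rfl⟩
  have ht₀H : t₀ ∈ H := hZH ht₀Z
  have hxT : (x : G) ∈ T := x.2.1
  have hyT : (y : G) ∈ T := y.2.1
  have hxZ : (x : G) ∉ (Subgroup.center G) := x.2.2
  have hyZ : (y : G) ∉ (Subgroup.center G) := y.2.2
  have hxyne : (x : G) ≠ (y : G) := fun h => hxy.1 (Subtype.ext h)
  -- the set S of transversal elements in H
  set S : Set G := {g | g ∈ T ∧ g ∈ H} with hS
  -- |S| = relindex
  have hcard : Nat.card S = (Subgroup.center G).relIndex H := by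
    rw [Subgroup.relIndex, Subgroup.index, ← Nat.card_congr
      (Equiv.ofBijective (fun g : S => (QuotientGroup.mk ⟨g, g.2.2⟩ :
        H ⧸ (Subgroup.center G).subgroupOf H)) ?_)]
    constructor
    · rintro ⟨a, haT, haH⟩ ⟨b, hbT, hbH⟩ hab
      rw [QuotientGroup.eq] at hab
      rw [Subgroup.mem_subgroupOf] at hab
      have hab' : a⁻¹ * b ∈ (Subgroup.center G) := hab
      obtain ⟨t, -, ht⟩ := hT a
      have h1 : b = t := ht b ⟨hbT, hab'⟩
      have h2 : a = t := ht a ⟨haT, by simpa using (Subgroup.center G).one_mem⟩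
      exact Subtype.ext (h2.trans h1.symm)
    · intro q
      induction q using QuotientGroup.induction_on with
      | H h =>
        obtain ⟨t, ⟨htT, htZ⟩, -⟩ := hT (h : G)
        have htH : t ∈ H := by
          have : t = (h : G) * ((h : G)⁻¹ * t) := by group
          rw [this]; exact H.mul_mem h.2 (hZH htZ)
        refine ⟨⟨t, htT, htH⟩, ?_⟩
        rw [QuotientGroup.eq, Subgroup.mem_subgroupOf]
        simpa [mul_inv_rev] using (Subgroup.center G).inv_mem htZ
  -- decompose S
  set N : Set ↥(T \ ((Subgroup.center G) : Set G)) := (TGraph G T).neighborSet x ∩ (TGraph G T).neighborSet y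
    with hN
  have hNmem : ∀ z, z ∈ N ↔ (x ≠ z ∧ (x:G) * z = z * x) ∧ (y ≠ z ∧ (y:G) * z = z * y) := by
    intro z; rfl
  have hSdecomp : S = (Subtype.val '' N) ∪ {(x : G), (y : G), t₀} := by
    ext g
    simp only [Set.mem_union, Set.mem_image, Set.mem_insert_iff, Set.mem_singleton_iff, hS,
      Set.mem_setOf_eq]
    constructor
    · rintro ⟨hgT, hgH⟩
      by_cases hgZ : g ∈ (Subgroup.center G)
      · refine Or.inr (Or.inr (Or.inr ?_))
        obtain ⟨t, -, ht⟩ := hT 1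
        have := (ht g ⟨hgT, by simpa using hgZ⟩).trans (ht t₀ ⟨ht₀T, by simpa using ht₀Z⟩).symm
        exact this
      · by_cases hgx : g = (x : G)
        · exact Or.inr (Or.inl hgx)
        by_cases hgy : g = (y : G)
        · exact Or.inr (Or.inr (Or.inl hgy))
        refine Or.inl ⟨⟨g, hgT, hgZ⟩, ?_, rfl⟩
        rw [hNmem]
        obtain ⟨h1, h2⟩ := (hmemH g).1 hgH
        exact ⟨⟨fun h => hgx (congrArg Subtype.val h).symm, h1⟩,
          ⟨fun h => hgy (congrArg Subtype.val h).symm, h2⟩⟩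
    · rintro (⟨z, hz, rfl⟩ | rfl | rfl | rfl)
      · obtain ⟨⟨-, h1⟩, ⟨-, h2⟩⟩ := (hNmem z).1 hz
        exact ⟨z.2.1, (hmemH _).2 ⟨h1, h2⟩⟩
      · exact ⟨hxT, hxH⟩
      · exact ⟨hyT, hyH⟩
      · exact ⟨ht₀T, ht₀H⟩
  have hdisj : Disjoint (Subtype.val '' N) {(x : G), (y : G), t₀} := by
    rw [Set.disjoint_right]
    rintro g (rfl | rfl | rfl) ⟨z, hz, hzg⟩
    · exact ((hNmem z).1 hz).1.1 (Subtype.ext hzg.symm)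
    · exact ((hNmem z).1 hz).2.1 (Subtype.ext hzg.symm)
    · exact z.2.2 (hzg ▸ ht₀Z)
  have htriple : ({(x : G), (y : G), t₀} : Set G).ncard = 3 := by
    rw [Set.ncard_eq_three]
    exact ⟨_, _, _, hxyne, fun h => hxZ (h ▸ ht₀Z), fun h => hyZ (h ▸ ht₀Z), rfl⟩
  have hScard : S.ncard = N.ncard + 3 := by
    rw [hSdecomp, Set.ncard_union_eq hdisj (Set.toFinite _) (Set.toFinite _),
      Set.ncard_image_of_injective _ Subtype.val_injective, htriple]
  have : (Subgroup.center G).relIndex H = N.ncard + 3 := by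
    rw [← hcard, Nat.card_coe_set_eq, hScard]
  omega
end

section
/- Let G be a finite non-abelian group and let x, y be distinct non-adjacent vertices of T(G). Then the number of common neighbours of x and y in T(G) equals [C_G(x) ∩ C_G(y) : Z(G)] − 1. -/
open scoped commutatorElement

open Pointwise Subgroup

lemma tgraph_adj {G : Type*} [Group G] (T : Set G)
    (a b : ↥(T \ (Subgroup.center G : Set G))) :
    (TGraph G T).Adj a b ↔ a ≠ b ∧ (a : G) * b = (b : G) * a := Iff.rfl

theorem stmt4 (G : Type*) [Group G] [Finite G] (hna : ∃ a b : G, a * b ≠ b * a)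
    (T : Set G) (hT : IsCenterTransversal G T) (x y : ↥(T \ (Subgroup.center G : Set G))) (hne : x ≠ y) (hxy : ¬ (TGraph G T).Adj x y) :
    ((TGraph G T).neighborSet x ∩ (TGraph G T).neighborSet y).ncard
      = (Subgroup.center G).relIndex
          (Subgroup.centralizer {(x : G)} ⊓ Subgroup.centralizer {(y : G)}) - 1 := by
  classical
  have hcomm : (x : G) * y ≠ (y : G) * x := fun h => hxy ⟨hne, h⟩
  have hZH : Subgroup.center G ≤ Subgroup.centralizer {(x : G)} ⊓ Subgroup.centralizer {(y : G)} :=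
    le_inf (Subgroup.center_le_centralizer _) (Subgroup.center_le_centralizer _)
  have hxH : (x : G) ∉ (Subgroup.centralizer {(x : G)} ⊓ Subgroup.centralizer {(y : G)} : Subgroup G) := fun h =>
    hcomm ((Subgroup.mem_centralizer_iff.mp h.2) (y : G) rfl).symm
  have hyH : (y : G) ∉ (Subgroup.centralizer {(x : G)} ⊓ Subgroup.centralizer {(y : G)} : Subgroup G) := fun h =>
    hcomm ((Subgroup.mem_centralizer_iff.mp h.1) (x : G) rfl)
  set S := (TGraph G T).neighborSet x ∩ (TGraph G T).neighborSet y with hS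
  have memH : ∀ t : ↥(T \ ((Subgroup.center G : Subgroup G) : Set G)), t ∈ S → (t : G) ∈ (Subgroup.centralizer {(x : G)} ⊓ Subgroup.centralizer {(y : G)} : Subgroup G) := by
    intro t ht
    obtain ⟨ht1, ht2⟩ := ht
    rw [SimpleGraph.mem_neighborSet, tgraph_adj] at ht1 ht2
    exact ⟨Subgroup.mem_centralizer_iff.mpr (by rintro g rfl; exact ht1.2),
      Subgroup.mem_centralizer_iff.mpr (by rintro g rfl; exact ht2.2)⟩
  have key : Nat.card S = Nat.card {q : ↥(Subgroup.centralizer {(x : G)} ⊓ Subgroup.centralizer {(y : G)}) ⧸ (Subgroup.center G).subgroupOf (Subgroup.centralizer {(x : G)} ⊓ Subgroup.centralizer {(y : G)}) // q ≠ 1} := by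
    apply Nat.card_congr
    refine Equiv.ofBijective
      (fun t => ⟨QuotientGroup.mk ⟨((t : ↥(T \ ((Subgroup.center G : Subgroup G) : Set G))) : G), memH t t.2⟩, ?_⟩) ⟨?_, ?_⟩
    · intro h1
      rw [QuotientGroup.eq_one_iff, Subgroup.mem_subgroupOf] at h1
      exact (t : ↥(T \ ((Subgroup.center G : Subgroup G) : Set G))).2.2 h1
    · intro a b hab
      have hab' : (QuotientGroup.mk ⟨((a : ↥(T \ ((Subgroup.center G : Subgroup G) : Set G))) : G), memH a a.2⟩ :
          ↥(Subgroup.centralizer {(x : G)} ⊓ Subgroup.centralizer {(y : G)}) ⧸ (Subgroup.center G).subgroupOf (Subgroup.centralizer {(x : G)} ⊓ Subgroup.centralizer {(y : G)})) = QuotientGroup.mk ⟨((b : ↥(T \ ((Subgroup.center G : Subgroup G) : Set G))) : G), memH b b.2⟩ :=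
        congrArg Subtype.val hab
      rw [QuotientGroup.eq, Subgroup.mem_subgroupOf] at hab'
      have hmem : ((a : ↥(T \ ((Subgroup.center G : Subgroup G) : Set G))) : G)⁻¹ * ((b : ↥(T \ ((Subgroup.center G : Subgroup G) : Set G))) : G) ∈ Subgroup.center G := by
        simpa using hab'
      obtain ⟨u, _, huniq⟩ := hT ((a : ↥(T \ ((Subgroup.center G : Subgroup G) : Set G))) : G)
      have ha := huniq ((a : ↥(T \ ((Subgroup.center G : Subgroup G) : Set G))) : G)
        ⟨(a : ↥(T \ ((Subgroup.center G : Subgroup G) : Set G))).2.1, by simpa using (Subgroup.center G).one_mem⟩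
      have hb := huniq ((b : ↥(T \ ((Subgroup.center G : Subgroup G) : Set G))) : G)
        ⟨(b : ↥(T \ ((Subgroup.center G : Subgroup G) : Set G))).2.1, hmem⟩
      exact Subtype.ext (Subtype.ext (ha.trans hb.symm))
    · rintro ⟨q, hq⟩
      obtain ⟨h, rfl⟩ := QuotientGroup.mk_surjective q
      obtain ⟨t, ⟨htT, htZ⟩, _⟩ := hT (h : G)
      have htZ' : t ∉ ((Subgroup.center G : Subgroup G) : Set G) := by
        intro ht
        have hhZ : (h : G) ∈ Subgroup.center G := by
          have := (Subgroup.center G).mul_mem ht ((Subgroup.center G).inv_mem htZ)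
          simpa [mul_inv_rev, mul_assoc] using this
        exact hq (by rw [QuotientGroup.eq_one_iff, Subgroup.mem_subgroupOf]; exact hhZ)
      have htH : t ∈ (Subgroup.centralizer {(x : G)} ⊓ Subgroup.centralizer {(y : G)} : Subgroup G) := by
        have := Subgroup.mul_mem _ h.2 (hZH htZ)
        simpa [mul_assoc] using this
      have hxt : (x : G) * t = t * (x : G) :=
        Subgroup.mem_centralizer_iff.mp htH.1 (x : G) rfl
      have hyt : (y : G) * t = t * (y : G) :=
        Subgroup.mem_centralizer_iff.mp htH.2 (y : G) rfl
      refine ⟨⟨⟨t, htT, htZ'⟩, ?_, ?_⟩, ?_⟩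
      · rw [SimpleGraph.mem_neighborSet, tgraph_adj]
        refine ⟨fun he => hxH ?_, hxt⟩
        have h' : (x : G) = t := congrArg Subtype.val he
        rw [← h'] at htH
        exact htH
      · rw [SimpleGraph.mem_neighborSet, tgraph_adj]
        refine ⟨fun he => hyH ?_, hyt⟩
        have h' : (y : G) = t := congrArg Subtype.val he
        rw [← h'] at htH
        exact htH
      · apply Subtype.ext
        show (QuotientGroup.mk ⟨t, htH⟩ : ↥(Subgroup.centralizer {(x : G)} ⊓ Subgroup.centralizer {(y : G)}) ⧸ (Subgroup.center G).subgroupOf (Subgroup.centralizer {(x : G)} ⊓ Subgroup.centralizer {(y : G)})) = QuotientGroup.mk h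
        rw [QuotientGroup.eq, Subgroup.mem_subgroupOf]
        simpa [mul_inv_rev] using (Subgroup.center G).inv_mem htZ
  have : Fintype (↥(Subgroup.centralizer {(x : G)} ⊓ Subgroup.centralizer {(y : G)}) ⧸ (Subgroup.center G).subgroupOf (Subgroup.centralizer {(x : G)} ⊓ Subgroup.centralizer {(y : G)})) := Fintype.ofFinite _
  have hsub : Nat.card {q : ↥(Subgroup.centralizer {(x : G)} ⊓ Subgroup.centralizer {(y : G)}) ⧸ (Subgroup.center G).subgroupOf (Subgroup.centralizer {(x : G)} ⊓ Subgroup.centralizer {(y : G)}) // q ≠ 1} = Nat.card (↥(Subgroup.centralizer {(x : G)} ⊓ Subgroup.centralizer {(y : G)}) ⧸ (Subgroup.center G).subgroupOf (Subgroup.centralizer {(x : G)} ⊓ Subgroup.centralizer {(y : G)})) - 1 := by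
    rw [Nat.card_eq_fintype_card, Nat.card_eq_fintype_card]
    classical
    rw [Fintype.card_subtype_compl, Fintype.card_subtype_eq]
  have hrel : (Subgroup.center G).relIndex (Subgroup.centralizer {(x : G)} ⊓ Subgroup.centralizer {(y : G)}) = Nat.card (↥(Subgroup.centralizer {(x : G)} ⊓ Subgroup.centralizer {(y : G)}) ⧸ (Subgroup.center G).subgroupOf (Subgroup.centralizer {(x : G)} ⊓ Subgroup.centralizer {(y : G)})) := by
    rw [Subgroup.relIndex, Subgroup.index_eq_card]
  rw [← Nat.card_coe_set_eq, key, hsub, hrel]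
end

section
/- Let G be a finite non-abelian group. The graph T(G) is regular if and only if all non-central elements of G have centralizers of the same order, i.e., |cs(G)| = 2, where cs(G) is the set of conjugacy class sizes of G. -/
open scoped commutatorElement

open Pointwise Subgroup


section Aux

variable {G : Type*} [Group G] {T : Set G}

/-- The transversal element of the coset of `g`. -/
noncomputable def trv (hT : IsCenterTransversal G T) (g : G) : G := (hT g).choose

lemma trv_mem (hT : IsCenterTransversal G T) (g : G) : trv hT g ∈ T :=
  (hT g).choose_spec.1.1

lemma trv_spec (hT : IsCenterTransversal G T) (g : G) :
    g⁻¹ * trv hT g ∈ Subgroup.center G :=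
  (hT g).choose_spec.1.2

lemma trv_unique (hT : IsCenterTransversal G T) {g t : G} (ht : t ∈ T)
    (hz : g⁻¹ * t ∈ Subgroup.center G) : trv hT g = t :=
  ((hT g).choose_spec.2 t ⟨ht, hz⟩).symm

lemma centralizer_eq_of_center {x t : G} (hz : x⁻¹ * t ∈ Subgroup.center G) :
    Subgroup.centralizer {t} = Subgroup.centralizer {x} := by
  obtain ⟨z, hzc, rfl⟩ : ∃ z, z ∈ Subgroup.center G ∧ t = x * z :=
    ⟨x⁻¹ * t, hz, by group⟩
  ext g
  simp only [mem_centralizer_singleton_iff]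
  have hcz := Subgroup.mem_center_iff.mp hzc g
  constructor
  · intro h
    have : (g * x) * z = (x * g) * z := by
      calc (g * x) * z = g * (x * z) := by rw [mul_assoc]
      _ = (x * z) * g := h
      _ = x * (z * g) := by rw [mul_assoc]
      _ = x * (g * z) := by rw [hcz]
      _ = (x * g) * z := by rw [mul_assoc]
    exact mul_right_cancel this
  · intro h
    calc g * (x * z) = (g * x) * z := by rw [mul_assoc]
    _ = (x * g) * z := by rw [h]
    _ = x * (g * z) := by rw [mul_assoc]
    _ = x * (z * g) := by rw [hcz]
    _ = (x * z) * g := by rw [mul_assoc]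

lemma trv_not_center (hT : IsCenterTransversal G T) {g : G}
    (hg : g ∉ Subgroup.center G) : trv hT g ∉ Subgroup.center G := by
  intro h
  apply hg
  have : g = trv hT g * (g⁻¹ * trv hT g)⁻¹ := by group
  rw [this]
  exact mul_mem h (inv_mem (trv_spec hT g))

lemma count_lemma [Finite G] (hT : IsCenterTransversal G T) (x : G) :
    (T ∩ (Subgroup.centralizer {x} : Set G)).ncard * Nat.card (Subgroup.center G)
      = Nat.card (Subgroup.centralizer {x}) := by
  have e : ↥(Subgroup.centralizer {x}) ≃
      ↥(T ∩ (Subgroup.centralizer {x} : Set G)) × ↥(Subgroup.center G) :=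
  { toFun := fun c =>
      (⟨trv hT c, trv_mem hT c, by
        have h1 : (trv hT (c : G)) = (c : G) * ((c : G)⁻¹ * trv hT c) := by group
        rw [SetLike.mem_coe, h1]
        exact mul_mem c.2 (Subgroup.center_le_centralizer _ (trv_spec hT c))⟩,
       ⟨(trv hT c)⁻¹ * c, by
        have := inv_mem (trv_spec hT (c : G))
        simpa [mul_inv_rev] using this⟩)
    invFun := fun p => ⟨p.1.1 * p.2.1,
      mul_mem p.1.2.2 (Subgroup.center_le_centralizer _ p.2.2)⟩
    left_inv := fun c => by
      ext
      simp
    right_inv := fun p => by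
      obtain ⟨⟨t, ht⟩, ⟨z, hz⟩⟩ := p
      have htz : trv hT (t * z) = t := trv_unique hT ht.1 (by
        have : (t * z)⁻¹ * t = z⁻¹ := by group
        rw [this]; exact inv_mem hz)
      ext
      · simp [htz]
      · simp [htz] }
  have h1 := Nat.card_congr e
  rw [Nat.card_prod, Nat.card_coe_set_eq] at h1
  exact h1.symm

lemma nbr_lemma [Finite G] (hT : IsCenterTransversal G T)
    (x : ↥(T \ (Subgroup.center G : Set G))) :
    ((TGraph G T).neighborSet x).ncard
      = (T ∩ (Subgroup.centralizer {(x : G)} : Set G)).ncard - 2 := by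
  set t0 := trv hT 1 with ht0
  have ht0Z : t0 ∈ Subgroup.center G := by
    have := trv_spec hT 1
    simpa using this
  have ht0T : t0 ∈ T := trv_mem hT 1
  have hxC : (x : G) ∈ (Subgroup.centralizer {(x : G)} : Set G) := by
    rw [SetLike.mem_coe, mem_centralizer_singleton_iff]
  have hxne : (x : G) ≠ t0 := fun h => x.2.2 (h ▸ ht0Z)
  have himg : Subtype.val '' ((TGraph G T).neighborSet x)
      = (T ∩ (Subgroup.centralizer {(x : G)} : Set G)) \ {(x : G), t0} := by
    ext g
    simp only [Set.mem_image, SimpleGraph.mem_neighborSet, Set.mem_diff,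
      Set.mem_inter_iff, Set.mem_insert_iff, Set.mem_singleton_iff, not_or]
    constructor
    · rintro ⟨y, hy, rfl⟩
      obtain ⟨hne, hcomm⟩ : _ ∧ _ := hy
      refine ⟨⟨y.2.1, ?_⟩, ?_, ?_⟩
      · rw [SetLike.mem_coe, mem_centralizer_singleton_iff]
        exact hcomm.symm
      · exact fun h => hne (Subtype.ext h.symm)
      · exact fun h => y.2.2 (h ▸ ht0Z)
    · rintro ⟨⟨hgT, hgC⟩, hgx, hgt0⟩
      have hgZ : g ∉ Subgroup.center G := by
        intro h
        exact hgt0 (trv_unique hT hgT (by simpa using h)).symm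
      refine ⟨⟨g, hgT, hgZ⟩, (⟨?_, ?_⟩ : _ ∧ _), rfl⟩
      · exact fun h => hgx (congrArg Subtype.val h).symm
      · rw [SetLike.mem_coe, mem_centralizer_singleton_iff] at hgC
        exact hgC.symm
  have hsub : ({(x : G), t0} : Set G) ⊆ T ∩ (Subgroup.centralizer {(x : G)} : Set G) := by
    rintro g (rfl | rfl)
    · exact ⟨x.2.1, hxC⟩
    · exact ⟨ht0T, Subgroup.center_le_centralizer _ ht0Z⟩
  calc ((TGraph G T).neighborSet x).ncard
      = (Subtype.val '' ((TGraph G T).neighborSet x)).ncard :=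
        (Set.ncard_image_of_injective _ Subtype.val_injective).symm
    _ = (T ∩ (Subgroup.centralizer {(x : G)} : Set G)).ncard - 2 := by
        rw [himg, Set.ncard_diff hsub, Set.ncard_pair hxne]

lemma two_le_lemma [Finite G] (hT : IsCenterTransversal G T)
    (x : ↥(T \ (Subgroup.center G : Set G))) :
    2 ≤ (T ∩ (Subgroup.centralizer {(x : G)} : Set G)).ncard := by
  have hxne : (x : G) ≠ trv hT 1 := fun h => x.2.2 (h ▸ (by simpa using trv_spec hT 1))
  rw [← Set.ncard_pair hxne]
  apply Set.ncard_le_ncard _ (Set.toFinite _)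
  rintro g (rfl | rfl)
  · exact ⟨x.2.1, by rw [SetLike.mem_coe, mem_centralizer_singleton_iff]⟩
  · exact ⟨trv_mem hT 1, Subgroup.center_le_centralizer _ (by simpa using trv_spec hT 1)⟩

end Aux

theorem stmt5 (G : Type*) [Group G] [Finite G] (hna : ∃ a b : G, a * b ≠ b * a)
    (T : Set G) (hT : IsCenterTransversal G T) :
    (∃ k, ∀ x : ↥(T \ (Subgroup.center G : Set G)), ((TGraph G T).neighborSet x).ncard = k) ↔
      ∀ x y : G, x ∉ Subgroup.center G → y ∉ Subgroup.center G →
        Nat.card (Subgroup.centralizer {x}) = Nat.card (Subgroup.centralizer {y}) := by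
  constructor
  · rintro ⟨k, hk⟩ x y hx hy
    -- move to the transversal representatives
    have hcx := centralizer_eq_of_center (trv_spec hT x)
    have hcy := centralizer_eq_of_center (trv_spec hT y)
    set vx : ↥(T \ (Subgroup.center G : Set G)) :=
      ⟨trv hT x, trv_mem hT x, trv_not_center hT hx⟩ with hvx
    set vy : ↥(T \ (Subgroup.center G : Set G)) :=
      ⟨trv hT y, trv_mem hT y, trv_not_center hT hy⟩ with hvy
    have h1 := hk vx
    have h2 := hk vy
    rw [nbr_lemma hT] at h1 h2
    have hge1 := two_le_lemma hT vx
    have hge2 := two_le_lemma hT vy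
    have heq : (T ∩ (Subgroup.centralizer {(vx : G)} : Set G)).ncard
        = (T ∩ (Subgroup.centralizer {(vy : G)} : Set G)).ncard := by omega
    have := count_lemma hT (vx : G)
    rw [heq, count_lemma hT (vy : G)] at this
    rw [← hcx, ← hcy]
    exact this.symm
  · intro h
    obtain ⟨a, b, hab⟩ := hna
    have ha : a ∉ Subgroup.center G := fun hc => hab (Subgroup.mem_center_iff.mp hc b).symm
    refine ⟨(T ∩ (Subgroup.centralizer {a} : Set G)).ncard - 2, fun x => ?_⟩
    rw [nbr_lemma hT x]
    have hcard := h (x : G) a x.2.2 ha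
    have h1 := count_lemma hT (x : G)
    have h2 := count_lemma hT a
    have hzpos : 0 < Nat.card (Subgroup.center G) := Nat.card_pos
    have : (T ∩ (Subgroup.centralizer {(x : G)} : Set G)).ncard
        = (T ∩ (Subgroup.centralizer {a} : Set G)).ncard := by
      have := h1.trans (hcard.trans h2.symm)
      exact Nat.eq_of_mul_eq_mul_right hzpos this
    rw [this]
end

section
/- If G is an extraspecial 2-group of order 2^{2n+1} with n ≥ 2, then T(G) is a connected strongly regular graph with parameters (2^{2n} − 1, 2^{2n−1} − 2, 2^{2n−2} − 3, 2^{2n−2} − 1). -/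
open scoped commutatorElement

open Pointwise Subgroup

section Aux
variable {G : Type*} [Group G]

lemma aux_comm_mem (hZ : commutator G = center G) (a b : G) :
    ⁅a, b⁆ ∈ center G := by
  rw [← hZ, _root_.commutator_def]
  exact Subgroup.commutator_mem_commutator (mem_top a) (mem_top b)

lemma aux_comm_mul_left (hZ : commutator G = center G) (a b c : G) :
    ⁅a * b, c⁆ = ⁅a, c⁆ * ⁅b, c⁆ := by
  have h := (Subgroup.mem_center_iff.mp (aux_comm_mem hZ b c)) a
  have h1 : ⁅a * b, c⁆ = (a * ⁅b, c⁆ * a⁻¹) * ⁅a, c⁆ := by group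
  have h2 : a * ⁅b, c⁆ * a⁻¹ = ⁅b, c⁆ := by rw [h]; group
  rw [h1, h2]
  exact (Subgroup.mem_center_iff.mp (aux_comm_mem hZ b c)) ⁅a, c⁆ |>.symm

lemma aux_comm_inv_left (hZ : commutator G = center G) (a c : G) :
    ⁅a⁻¹, c⁆ = ⁅a, c⁆⁻¹ := by
  have h := aux_comm_mul_left hZ a⁻¹ a c
  simp only [inv_mul_cancel] at h
  have : ⁅(1 : G), c⁆ = 1 := by group
  rw [this] at h
  exact eq_inv_of_mul_eq_one_left h.symm

/-- The homomorphism `x ↦ ⁅x, g⁆` into the center. -/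
def phiHom (hZ : commutator G = center G) (g : G) : G →* center G where
  toFun x := ⟨⁅x, g⁆, aux_comm_mem hZ x g⟩
  map_one' := by ext; show ⁅(1:G), g⁆ = 1; group
  map_mul' a b := by ext; exact aux_comm_mul_left hZ a b g

lemma ker_phiHom (hZ : commutator G = center G) (g : G) :
    (phiHom hZ g).ker = centralizer {g} := by
  ext x
  rw [MonoidHom.mem_ker, mem_centralizer_singleton_iff]
  rw [Subtype.ext_iff]
  exact commutatorElement_eq_one_iff_mul_comm

end Aux

section Aux2
variable {G : Type*} [Group G] [Finite G]

lemma aux_center_two (h2 : Nat.card (center G) = 2) {a b : G}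
    (ha : a ∈ center G) (hb : b ∈ center G) (ha1 : a ≠ 1) (hb1 : b ≠ 1) : a = b := by
  by_contra hab
  have hinj : Function.Injective (![⟨1, one_mem _⟩, ⟨a, ha⟩, ⟨b, hb⟩] : Fin 3 → center G) := by
    intro i j hij
    fin_cases i <;> fin_cases j <;>
      first
      | rfl
      | (exfalso; simp_all [Subtype.ext_iff])
  have := Nat.card_le_card_of_injective _ hinj
  rw [h2, Nat.card_eq_fintype_card, Fintype.card_fin] at this
  omega

lemma card_centralizer_mul (hZ : commutator G = center G)
    (h2 : Nat.card (center G) = 2) {g : G} (hg : g ∉ center G) :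
    Nat.card G = Nat.card (center G) * Nat.card (centralizer {g}) := by
  have hrange : (phiHom hZ g).range = ⊤ := by
    apply Subgroup.eq_of_le_of_card_ge le_top
    rw [Subgroup.card_top, h2]
    have hdvd : Nat.card (phiHom hZ g).range ∣ Nat.card (center G) :=
      Subgroup.card_subgroup_dvd_card _
    rw [h2] at hdvd
    have hne : (1 : ℕ) < Nat.card (phiHom hZ g).range := by
      rw [Subgroup.one_lt_card_iff_ne_bot]
      intro hbot
      apply hg
      rw [Subgroup.mem_center_iff]
      intro x
      have h1 : phiHom hZ g x = 1 := by
        have hm : phiHom hZ g x ∈ (phiHom hZ g).range := ⟨x, rfl⟩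
        rw [hbot] at hm
        exact Subgroup.mem_bot.mp hm
      have h2 : ⁅x, g⁆ = 1 := congrArg Subtype.val h1
      exact commutatorElement_eq_one_iff_mul_comm.mp h2
    have := Nat.le_of_dvd (by norm_num) hdvd
    omega
  have h1 := Subgroup.card_eq_card_quotient_mul_card_subgroup (phiHom hZ g).ker
  have h2' : Nat.card (G ⧸ (phiHom hZ g).ker) = Nat.card (center G) := by
    have e := QuotientGroup.quotientKerEquivRange (phiHom hZ g)
    rw [Nat.card_congr e.toEquiv, hrange]
    exact Subgroup.card_top
  rw [h1, h2', ker_phiHom]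

lemma card_centralizer_pair (hZ : commutator G = center G) (h2 : Nat.card (center G) = 2)
    {t s : G} (ht : t ∉ center G) (hs : s ∉ center G) (hts : t⁻¹ * s ∉ center G) :
    Nat.card (centralizer {t}) =
      Nat.card (center G) * Nat.card (centralizer {t} ⊓ centralizer {s} : Subgroup G) := by
  set C := centralizer {t} with hC
  set ψ := (phiHom hZ s).domRestrict C with hψdef
  have hkerψ : ψ.ker = (centralizer {t} ⊓ centralizer {s}).subgroupOf C := by
    rw [hψdef, MonoidHom.ker_restrict, ker_phiHom]
    ext x
    simp only [Subgroup.mem_subgroupOf, Subgroup.mem_inf]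
    exact ⟨fun h => ⟨x.2, h⟩, fun h => h.2⟩
  have hCle : ¬ C ≤ centralizer {s} := by
    intro hle
    have hc1 := card_centralizer_mul hZ h2 ht
    have hc2 := card_centralizer_mul hZ h2 hs
    rw [h2] at hc1 hc2
    have hcards : Nat.card (centralizer {s}) ≤ Nat.card C := by rw [hC]; omega
    have hCeq : C = centralizer {s} := Subgroup.eq_of_le_of_card_ge hle hcards
    apply hts
    rw [Subgroup.mem_center_iff]
    intro g
    have key : ⁅t, g⁆ = ⁅s, g⁆ := by
      have hiff : g * t = t * g ↔ g * s = s * g := by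
        rw [← mem_centralizer_singleton_iff, ← mem_centralizer_singleton_iff, ← hC, hCeq]
      by_cases h1 : ⁅t, g⁆ = 1
      · have := commutatorElement_eq_one_iff_mul_comm.mp h1
        have : g * s = s * g := hiff.mp this.symm
        rw [h1, commutatorElement_eq_one_iff_mul_comm.mpr this.symm]
      · have h2' : ⁅s, g⁆ ≠ 1 := by
          intro hsg
          have := commutatorElement_eq_one_iff_mul_comm.mp hsg
          exact h1 (commutatorElement_eq_one_iff_mul_comm.mpr (hiff.mpr this.symm).symm)
        exact aux_center_two h2 (aux_comm_mem hZ t g) (aux_comm_mem hZ s g) h1 h2'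
    have hcomm1 : ⁅t⁻¹ * s, g⁆ = 1 := by
      rw [aux_comm_mul_left hZ, aux_comm_inv_left hZ, key, inv_mul_cancel]
    exact (commutatorElement_eq_one_iff_mul_comm.mp hcomm1).symm
  have hsurj : Function.Surjective ψ := by
    obtain ⟨x, hxC, hxs⟩ : ∃ x, x ∈ C ∧ x ∉ centralizer {s} := by
      by_contra h
      push_neg at h
      exact hCle h
    have hψx : (ψ ⟨x, hxC⟩ : G) ≠ 1 := by
      intro h
      apply hxs
      rw [mem_centralizer_singleton_iff]
      have : ⁅x, s⁆ = 1 := h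
      exact commutatorElement_eq_one_iff_mul_comm.mp this
    intro z
    by_cases hz : z = 1
    · exact ⟨1, by rw [map_one, hz]⟩
    · refine ⟨⟨x, hxC⟩, ?_⟩
      have hz1 : (z : G) ≠ 1 := by
        intro h
        exact hz (Subtype.ext h)
      exact Subtype.ext (aux_center_two h2 (ψ ⟨x, hxC⟩).2 z.2 hψx hz1)
  have hmain := Subgroup.card_eq_card_quotient_mul_card_subgroup ψ.ker
  have hquot : Nat.card (↥C ⧸ ψ.ker) = Nat.card (center G) :=
    Nat.card_congr (QuotientGroup.quotientKerEquivOfSurjective ψ hsurj).toEquiv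
  have hker : Nat.card ψ.ker = Nat.card (centralizer {t} ⊓ centralizer {s} : Subgroup G) := by
    rw [hkerψ]
    exact Nat.card_congr (Subgroup.subgroupOfEquivOfLe inf_le_left).toEquiv
  rw [hmain, hquot, hker]

end Aux2


section Aux3
variable {G : Type*} [Group G] [Finite G] {T : Set G}

lemma trans_eq (hT : IsCenterTransversal G T) {t s : G} (ht : t ∈ T) (hs : s ∈ T)
    (h : s⁻¹ * t ∈ center G) : t = s :=
  (hT s).unique ⟨ht, h⟩ ⟨hs, by rw [inv_mul_cancel]; exact one_mem _⟩

lemma card_inter_transversal (hT : IsCenterTransversal G T) (C : Subgroup G)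
    (hC : center G ≤ C) :
    Nat.card ((C : Set G) ∩ T : Set G) * Nat.card (center G) = Nat.card C := by
  have e : (((C : Set G) ∩ T : Set G) × center G) ≃ C := by
    refine Equiv.ofBijective
      (fun p => ⟨p.1.1 * p.2.1, mul_mem p.1.2.1 (hC p.2.2)⟩) ⟨?_, ?_⟩
    · rintro ⟨⟨t1, ht1C, ht1T⟩, z1⟩ ⟨⟨t2, ht2C, ht2T⟩, z2⟩ h
      have h' : t1 * (z1 : G) = t2 * (z2 : G) := congrArg Subtype.val h
      have hZmem : t2⁻¹ * t1 ∈ center G := by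
        have heq : t2⁻¹ * t1 = (z2 : G) * (z1 : G)⁻¹ := by
          rw [eq_comm, ← mul_inv_eq_iff_eq_mul] at h'
          rw [← h']; group
        rw [heq]
        exact mul_mem z2.2 (inv_mem z1.2)
      have ht12 : t1 = t2 := trans_eq hT ht1T ht2T hZmem
      subst ht12
      have hz12 : z1 = z2 := by
        apply Subtype.ext
        exact mul_left_cancel h'
      subst hz12
      rfl
    · rintro ⟨c, hc⟩
      obtain ⟨t, ⟨htT, htZ⟩, -⟩ := hT c
      have htC : t ∈ C := by
        have ht : t = c * (c⁻¹ * t) := by group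
        rw [ht]; exact mul_mem hc (hC htZ)
      refine ⟨⟨⟨t, htC, htT⟩, ⟨t⁻¹ * c, ?_⟩⟩, ?_⟩
      · have h' : t⁻¹ * c = (c⁻¹ * t)⁻¹ := by group
        rw [h']; exact inv_mem htZ
      · apply Subtype.ext
        show t * (t⁻¹ * c) = c
        group
  have h := Nat.card_congr e
  rw [Nat.card_prod] at h
  exact h

end Aux3


theorem stmt8 (G : Type*) [Group G] [Finite G] (n : ℕ) (hn : 2 ≤ n)
    (hG : IsExtraspecial 2 G) (hcard : Nat.card G = 2 ^ (2 * n + 1))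
    (T : Set G) (hT : IsCenterTransversal G T) :
    (TGraph G T).Connected ∧
      IsSRG (TGraph G T) (2 ^ (2 * n) - 1) (2 ^ (2 * n - 1) - 2)
        (2 ^ (2 * n - 2) - 3) (2 ^ (2 * n - 2) - 1) := by
  obtain ⟨hp, hZcomm, hfrat, hZcard⟩ := hG
  -- the unique element of T lying in the center
  obtain ⟨z₀, hz₀, hz₀uniq⟩ := hT 1
  simp only [inv_one, one_mul] at hz₀ hz₀uniq
  have hz₀T : z₀ ∈ T := hz₀.1
  have hz₀Z : z₀ ∈ center G := hz₀.2
  have hTZ : ∀ t ∈ T, t ∈ center G → t = z₀ := fun t ht htZ => hz₀uniq t ⟨ht, htZ⟩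
  -- power arithmetic
  have hpow1 : 2 ^ (2 * n) * 2 = 2 ^ (2 * n + 1) := (pow_succ 2 (2 * n)).symm
  have hpow2 : 2 ^ (2 * n - 1) * 2 = 2 ^ (2 * n) := by
    rw [← pow_succ]; congr 1; omega
  have hpow3 : 2 ^ (2 * n - 2) * 2 = 2 ^ (2 * n - 1) := by
    rw [← pow_succ]; congr 1; omega
  have hpow4 : (4 : ℕ) ≤ 2 ^ (2 * n - 2) := by
    calc (4 : ℕ) = 2 ^ 2 := by norm_num
    _ ≤ 2 ^ (2 * n - 2) := Nat.pow_le_pow_right (by norm_num) (by omega)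
  -- card of T
  have hcardT : T.ncard = 2 ^ (2 * n) := by
    have h := card_inter_transversal hT ⊤ le_top
    rw [hZcard] at h
    have htop : (((⊤ : Subgroup G) : Set G) ∩ T) = T := by simp
    rw [htop, Subgroup.card_top, hcard, ← hpow1] at h
    rw [← Nat.card_coe_set_eq]
    omega
  -- number of vertices
  have hSv : T \ ((center G : Subgroup G) : Set G) = T \ {z₀} := by
    ext g
    simp only [Set.mem_diff, Set.mem_singleton_iff, SetLike.mem_coe]
    constructor
    · rintro ⟨hgT, hgZ⟩; exact ⟨hgT, fun h => hgZ (h ▸ hz₀Z)⟩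
    · rintro ⟨hgT, hgz⟩; exact ⟨hgT, fun h => hgz (hTZ g hgT h)⟩
  have hv : Nat.card ↥(T \ ((center G : Subgroup G) : Set G)) = 2 ^ (2 * n) - 1 := by
    rw [Nat.card_coe_set_eq, hSv, Set.ncard_diff_singleton_of_mem hz₀T, hcardT]
  -- cardinality of centralizer traces on T
  have hCsetcard : ∀ g : G, g ∉ center G →
      (((centralizer {g} : Subgroup G) : Set G) ∩ T).ncard = 2 ^ (2 * n - 1) := by
    intro g hg
    have h := card_inter_transversal hT (centralizer {g}) (center_le_centralizer _)
    rw [hZcard] at h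
    have hc := card_centralizer_mul hZcomm hZcard hg
    rw [hZcard, hcard] at hc
    have hkey : (2 : ℕ) ^ (2 * n + 1) = 2 ^ (2 * n - 1) * 4 := by
      rw [← hpow1, ← hpow2]; ring
    rw [← Nat.card_coe_set_eq]
    omega
  have hCCsetcard : ∀ g h : G, g ∉ center G → h ∉ center G → g⁻¹ * h ∉ center G →
      (((centralizer {g} ⊓ centralizer {h} : Subgroup G) : Set G) ∩ T).ncard
        = 2 ^ (2 * n - 2) := by
    intro g h hg hh hgh
    have h1 := card_inter_transversal hT (centralizer {g} ⊓ centralizer {h})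
      (le_inf (center_le_centralizer _) (center_le_centralizer _))
    rw [hZcard] at h1
    have h2 := card_centralizer_pair hZcomm hZcard hg hh hgh
    rw [hZcard] at h2
    have h3 := card_centralizer_mul hZcomm hZcard hg
    rw [hZcard, hcard] at h3
    have hkey : (2 : ℕ) ^ (2 * n + 1) = 2 ^ (2 * n - 2) * 8 := by
      rw [← hpow1, ← hpow2, ← hpow3]; ring
    rw [← Nat.card_coe_set_eq]
    omega
  -- description of neighbor sets
  have hNimg : ∀ x : ↥(T \ ((center G : Subgroup G) : Set G)),
      Subtype.val '' ((TGraph G T).neighborSet x) =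
        (((centralizer {(x : G)} : Subgroup G) : Set G) ∩ T) \ {z₀, (x : G)} := by
    intro x
    ext g
    simp only [Set.mem_image, SimpleGraph.mem_neighborSet, Set.mem_diff, Set.mem_inter_iff,
      Set.mem_insert_iff, Set.mem_singleton_iff, SetLike.mem_coe,
      mem_centralizer_singleton_iff, not_or]
    constructor
    · rintro ⟨y, ⟨hne, hcomm⟩, rfl⟩
      have hyZ : (y : G) ∉ center G := y.2.2
      refine ⟨⟨hcomm.symm, y.2.1⟩, ?_, ?_⟩
      · exact fun h => hyZ (h ▸ hz₀Z)
      · exact fun h => hne (Subtype.ext h.symm)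
    · rintro ⟨⟨hgc, hgT⟩, hgz₀, hgx⟩
      have hgZ : g ∉ ((center G : Subgroup G) : Set G) := fun h => hgz₀ (hTZ g hgT h)
      refine ⟨⟨g, ⟨hgT, hgZ⟩⟩, ⟨?_, hgc.symm⟩, rfl⟩
      exact fun h => hgx (congrArg Subtype.val h).symm
  -- the k-regularity
  have hk : ∀ x, ((TGraph G T).neighborSet x).ncard = 2 ^ (2 * n - 1) - 2 := by
    intro x
    have hxZ : (x : G) ∉ center G := x.2.2
    have hz₀x : z₀ ≠ (x : G) := fun h => hxZ (h ▸ hz₀Z)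
    rw [← Set.ncard_image_of_injective _ Subtype.val_injective, hNimg x]
    have hsub : ({z₀, (x : G)} : Set G) ⊆
        ((centralizer {(x : G)} : Subgroup G) : Set G) ∩ T := by
      rintro g (rfl | rfl)
      · exact ⟨center_le_centralizer _ hz₀Z, hz₀T⟩
      · exact ⟨mem_centralizer_singleton_iff.mpr rfl, x.2.1⟩
    rw [Set.ncard_diff hsub, Set.ncard_pair hz₀x, hCsetcard _ hxZ]
  -- common neighbor sets
  have hNNimg : ∀ x y : ↥(T \ ((center G : Subgroup G) : Set G)),
      Subtype.val '' ((TGraph G T).neighborSet x ∩ (TGraph G T).neighborSet y) =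
        (((centralizer {(x : G)} ⊓ centralizer {(y : G)} : Subgroup G) : Set G) ∩ T)
          \ {z₀, (x : G), (y : G)} := by
    intro x y
    rw [Set.image_inter Subtype.val_injective, hNimg x, hNimg y]
    ext g
    simp only [Set.mem_diff, Set.mem_inter_iff, Set.mem_insert_iff, Set.mem_singleton_iff,
      SetLike.mem_coe, Subgroup.mem_inf, not_or]
    tauto
  -- lambda
  have hl : ∀ x y, (TGraph G T).Adj x y →
      ((TGraph G T).neighborSet x ∩ (TGraph G T).neighborSet y).ncard
        = 2 ^ (2 * n - 2) - 3 := by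
    intro x y hxy
    obtain ⟨hne, hcomm⟩ := hxy
    have hxZ : (x : G) ∉ center G := x.2.2
    have hyZ : (y : G) ∉ center G := y.2.2
    have hvalne : (x : G) ≠ (y : G) := fun h => hne (Subtype.ext h)
    have hinvZ : (x : G)⁻¹ * (y : G) ∉ center G := by
      intro h
      exact hvalne (trans_eq hT y.2.1 x.2.1 h).symm
    have hz₀x : z₀ ≠ (x : G) := fun h => hxZ (h ▸ hz₀Z)
    have hz₀y : z₀ ≠ (y : G) := fun h => hyZ (h ▸ hz₀Z)
    rw [← Set.ncard_image_of_injective _ Subtype.val_injective, hNNimg]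
    have hsub : ({z₀, (x : G), (y : G)} : Set G) ⊆
        ((centralizer {(x : G)} ⊓ centralizer {(y : G)} : Subgroup G) : Set G) ∩ T := by
      rintro g (rfl | rfl | rfl)
      · exact ⟨Subgroup.mem_inf.mpr
          ⟨center_le_centralizer _ hz₀Z, center_le_centralizer _ hz₀Z⟩, hz₀T⟩
      · exact ⟨Subgroup.mem_inf.mpr
          ⟨mem_centralizer_singleton_iff.mpr rfl,
           mem_centralizer_singleton_iff.mpr hcomm⟩, x.2.1⟩
      · exact ⟨Subgroup.mem_inf.mpr
          ⟨mem_centralizer_singleton_iff.mpr hcomm.symm,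
           mem_centralizer_singleton_iff.mpr rfl⟩, y.2.1⟩
    rw [Set.ncard_diff hsub, hCCsetcard _ _ hxZ hyZ hinvZ]
    have h3 : ({z₀, (x : G), (y : G)} : Set G).ncard = 3 := by
      rw [Set.ncard_insert_of_notMem (by simp [hz₀x, hz₀y]), Set.ncard_pair hvalne]
    rw [h3]
  -- mu
  have hm : ∀ x y, x ≠ y → ¬ (TGraph G T).Adj x y →
      ((TGraph G T).neighborSet x ∩ (TGraph G T).neighborSet y).ncard
        = 2 ^ (2 * n - 2) - 1 := by
    intro x y hne hnadj
    have hxZ : (x : G) ∉ center G := x.2.2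
    have hyZ : (y : G) ∉ center G := y.2.2
    have hvalne : (x : G) ≠ (y : G) := fun h => hne (Subtype.ext h)
    have hinvZ : (x : G)⁻¹ * (y : G) ∉ center G := by
      intro h
      exact hvalne (trans_eq hT y.2.1 x.2.1 h).symm
    have hncomm : ¬ ((x : G) * (y : G) = (y : G) * (x : G)) := fun h => hnadj ⟨hne, h⟩
    rw [← Set.ncard_image_of_injective _ Subtype.val_injective, hNNimg]
    have heq : ((((centralizer {(x : G)} ⊓ centralizer {(y : G)} : Subgroup G) : Set G) ∩ T)
          \ {z₀, (x : G), (y : G)})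
        = (((centralizer {(x : G)} ⊓ centralizer {(y : G)} : Subgroup G) : Set G) ∩ T)
          \ {z₀} := by
      ext g
      simp only [Set.mem_diff, Set.mem_inter_iff, Set.mem_insert_iff, Set.mem_singleton_iff,
        SetLike.mem_coe, Subgroup.mem_inf, not_or]
      constructor
      · rintro ⟨hgm, hgz₀, -, -⟩
        exact ⟨hgm, hgz₀⟩
      · rintro ⟨⟨⟨hgx, hgy⟩, hgT⟩, hgz₀⟩
        refine ⟨⟨⟨hgx, hgy⟩, hgT⟩, hgz₀, ?_, ?_⟩
        · rintro rfl
          exact hncomm (mem_centralizer_singleton_iff.mp hgy)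
        · rintro rfl
          exact hncomm (mem_centralizer_singleton_iff.mp hgx).symm
    have hsub : ({z₀} : Set G) ⊆
        ((centralizer {(x : G)} ⊓ centralizer {(y : G)} : Subgroup G) : Set G) ∩ T := by
      rintro g rfl
      exact ⟨Subgroup.mem_inf.mpr
        ⟨center_le_centralizer _ hz₀Z, center_le_centralizer _ hz₀Z⟩, hz₀T⟩
    rw [heq, Set.ncard_diff hsub, Set.ncard_singleton, hCCsetcard _ _ hxZ hyZ hinvZ]
  -- conclusion
  refine ⟨?_, hv, by have a3 := hpow3; have a4 := hpow4; omega,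
    by have a2 := hpow2; have a3 := hpow3; have a4 := hpow4; omega, hk, hl, hm⟩
  rw [SimpleGraph.connected_iff]
  constructor
  · intro x y
    by_cases hxy : x = y
    · subst hxy; exact SimpleGraph.Reachable.refl x
    by_cases hadj : (TGraph G T).Adj x y
    · exact hadj.reachable
    · have hcn := hm x y hxy hadj
      have hpos : ((TGraph G T).neighborSet x ∩ (TGraph G T).neighborSet y).ncard ≠ 0 := by
        omega
      obtain ⟨z, hzx, hzy⟩ := Set.nonempty_of_ncard_ne_zero hpos
      have hxz : (TGraph G T).Adj x z := hzx
      have hyz : (TGraph G T).Adj y z := hzy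
      exact hxz.reachable.trans hyz.symm.reachable
  · have hpos : 0 < Nat.card ↥(T \ ((center G : Subgroup G) : Set G)) := by
      rw [hv]
      have a2 := hpow2; have a3 := hpow3; have a4 := hpow4
      omega
    exact (Nat.card_pos_iff.mp hpos).1
end

section
/- Let G be a finite non-abelian group such that T(G) is a connected strongly regular graph. Then for all non-central x, y ∈ G with x ∉ yZ(G), one has C_G(x) ≠ C_G(y). -/
open scoped commutatorElement

open Pointwise Subgroup

lemma srg_l_succ_ne_k {V : Type*} [Finite V] (G : SimpleGraph V) (v k l m : ℕ)
    (h : IsSRG G v k l m) (hc : G.Connected) : l + 1 ≠ k := by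
  intro hl
  obtain ⟨hv, hk, hkv, hdeg, hlam, -⟩ := h
  have hstep : ∀ a c, G.Adj a c → G.neighborSet a ⊆ insert c (G.neighborSet c) := by
    intro a c hac u hu
    by_contra hucn
    simp only [Set.mem_insert_iff, not_or] at hucn
    obtain ⟨huc, hun⟩ := hucn
    have hS : (G.neighborSet a ∩ G.neighborSet c) ⊆ G.neighborSet a \ {c, u} := by
      rintro w ⟨hw1, hw2⟩
      refine ⟨hw1, ?_⟩
      rintro (rfl | rfl)
      · exact G.irrefl hw2
      · exact hun hw2
    have hcu : ({c, u} : Set V) ⊆ G.neighborSet a := by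
      rintro w (rfl | rfl)
      · exact hac
      · exact hu
    have h2 : ({c, u} : Set V).ncard = 2 := Set.ncard_pair (Ne.symm huc)
    have hdiff : (G.neighborSet a \ {c, u}).ncard = k - 2 := by
      rw [Set.ncard_diff hcu (Set.toFinite _), hdeg a, h2]
    have hle : l ≤ k - 2 := by
      rw [← hlam a c hac, ← hdiff]
      exact Set.ncard_le_ncard hS (Set.toFinite _)
    have h2k : 2 ≤ k := by
      rw [← hdeg a, ← h2]
      exact Set.ncard_le_ncard hcu (Set.toFinite _)
    omega
  have hclosed : ∀ a c, G.Adj a c →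
      insert a (G.neighborSet a) = insert c (G.neighborSet c) := by
    intro a c hac
    apply Set.Subset.antisymm
    · rintro w (rfl | hw)
      · exact Set.mem_insert_of_mem _ hac.symm
      · exact hstep a c hac hw
    · rintro w (rfl | hw)
      · exact Set.mem_insert_of_mem _ hac
      · exact hstep c a hac.symm hw
  have hwalk : ∀ a b : V, G.Walk a b →
      insert a (G.neighborSet a) = insert b (G.neighborSet b) := by
    intro a b p
    induction p with
    | nil => rfl
    | cons h p ih => exact (hclosed _ _ h).trans ih
  have : Nonempty V := hc.nonempty
  obtain ⟨a⟩ := this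
  have huniv : (Set.univ : Set V) ⊆ insert a (G.neighborSet a) := by
    intro b _
    obtain ⟨p⟩ := hc.preconnected a b
    rw [hwalk a b p]
    exact Set.mem_insert _ _
  have : v ≤ k + 1 := by
    calc v = Nat.card V := hv.symm
    _ = (Set.univ : Set V).ncard := (Set.ncard_univ V).symm
    _ ≤ (insert a (G.neighborSet a)).ncard :=
        Set.ncard_le_ncard huniv (Set.toFinite _)
    _ ≤ (G.neighborSet a).ncard + 1 := Set.ncard_insert_le _ _
    _ = k + 1 := by rw [hdeg a]
  omega

/-- Transferring commutation across a central shift. -/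
lemma commute_coset_transfer {G : Type*} [Group G] {x t : G}
    (h : x⁻¹ * t ∈ Subgroup.center G) (g : G) : Commute g t ↔ Commute g x := by
  have hz : Commute g (x⁻¹ * t) := (Subgroup.mem_center_iff.mp h g)
  constructor
  · intro hgt
    have hx : x = t * (x⁻¹ * t)⁻¹ := by group
    rw [hx]
    exact hgt.mul_right hz.inv_right
  · intro hgx
    have ht : t = x * (x⁻¹ * t) := by group
    rw [ht]
    exact hgx.mul_right hz


theorem stmt9 (G : Type*) [Group G] [Finite G] (hna : ∃ a b : G, a * b ≠ b * a)
    (T : Set G) (hT : IsCenterTransversal G T) (hconn : (TGraph G T).Connected)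
    (hsrg : ∃ v k l m, IsSRG (TGraph G T) v k l m) :
    ∀ x y : G, x ∉ Subgroup.center G → y ∉ Subgroup.center G →
      x ∉ y • (Subgroup.center G : Set G) →
      Subgroup.centralizer {x} ≠ Subgroup.centralizer {y} := by
  intro x y hx hy hxy heq
  obtain ⟨tx, ⟨htxT, hzx⟩, -⟩ := hT x
  obtain ⟨ty, ⟨htyT, hzy⟩, -⟩ := hT y
  -- the representatives are non-central
  have htxnc : tx ∉ (Subgroup.center G : Set G) := by
    intro htc
    apply hx
    have : x = tx * (x⁻¹ * tx)⁻¹ := by group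
    rw [this]
    exact mul_mem htc (inv_mem hzx)
  have htync : ty ∉ (Subgroup.center G : Set G) := by
    intro htc
    apply hy
    have : y = ty * (y⁻¹ * ty)⁻¹ := by group
    rw [this]
    exact mul_mem htc (inv_mem hzy)
  -- the representatives are distinct
  have hne : tx ≠ ty := by
    rintro rfl
    apply hxy
    refine Set.mem_smul_set.mpr ⟨(y⁻¹ * tx) * (x⁻¹ * tx)⁻¹, mul_mem hzy (inv_mem hzx), ?_⟩
    simp only [smul_eq_mul]
    group
  -- x and y commute
  have hcxy : Commute x y := by
    have : x ∈ Subgroup.centralizer {y} := by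
      rw [← heq]
      exact Subgroup.mem_centralizer_singleton_iff.mpr rfl
    exact Subgroup.mem_centralizer_singleton_iff.mp this
  -- the two vertices
  set V := ↥(T \ (Subgroup.center G : Set G)) with hV
  let vx : V := ⟨tx, htxT, htxnc⟩
  let vy : V := ⟨ty, htyT, htync⟩
  -- they are adjacent
  have hadj : (TGraph G T).Adj vx vy := by
    refine ⟨fun h => hne (congrArg Subtype.val h), ?_⟩
    have c1 : Commute x ty := (commute_coset_transfer hzy x).mpr hcxy
    have c2 : Commute ty tx := (commute_coset_transfer hzx ty).mpr c1.symm
    exact c2.symm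
  -- common neighbourhood equals N(vx) \ {vy}
  have hNeq : (TGraph G T).neighborSet vx ∩ (TGraph G T).neighborSet vy
      = (TGraph G T).neighborSet vx \ {vy} := by
    ext u
    constructor
    · rintro ⟨h1, h2⟩
      refine ⟨h1, ?_⟩
      rintro rfl
      exact (TGraph G T).irrefl h2
    · rintro ⟨h1, h2⟩
      refine ⟨h1, ?_⟩
      have huvy : u ≠ vy := h2
      refine ⟨fun h => huvy h.symm, ?_⟩
      -- u commutes with tx, hence with x, hence with y, hence with ty
      have cux : Commute (u : G) x := (commute_coset_transfer hzx (u : G)).mp h1.2.symm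
      have : (u : G) ∈ Subgroup.centralizer {y} := by
        rw [← heq]
        exact Subgroup.mem_centralizer_singleton_iff.mpr cux
      have cuy : Commute (u : G) y := Subgroup.mem_centralizer_singleton_iff.mp this
      have cuty : Commute (u : G) ty := (commute_coset_transfer hzy (u : G)).mpr cuy
      exact cuty.symm
  obtain ⟨v, k, l, m, hS⟩ := hsrg
  have hdeg := hS.2.2.2.1
  have hlam := hS.2.2.2.2.1
  have hvyN : vy ∈ (TGraph G T).neighborSet vx := hadj
  have hlk : l + 1 = k := by
    rw [← hlam vx vy hadj, hNeq, Set.ncard_diff_singleton_add_one hvyN (Set.toFinite _),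
      hdeg vx]
  exact srg_l_succ_ne_k (TGraph G T) v k l m hS hconn hlk
end

section
/- Let p be an odd prime and G a finite non-abelian p-group. If T(G) is strongly regular, then T(G) is disconnected. -/
open scoped commutatorElement

open Pointwise Subgroup
lemma sq_not_center' {p : ℕ} (hp : p.Prime) (hodd : Odd p) {G : Type*} [Group G] [Finite G]
    (hpG : IsPGroup p G) {t : G} (ht : t ∉ Subgroup.center G) :
    t ^ 2 ∉ Subgroup.center G := by
  intro h2
  apply ht
  obtain ⟨k, hk⟩ := hpG t
  have hdvd : orderOf t ∣ p ^ k := orderOf_dvd_of_pow_eq_one hk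
  obtain ⟨m, _, hord⟩ := (Nat.dvd_prime_pow hp).1 hdvd
  have hoddn : Odd (orderOf t) := hord ▸ hodd.pow
  have ht' : t = (t ^ 2) ^ ((orderOf t + 1) / 2) := by
    rw [← pow_mul]
    have h : 2 * ((orderOf t + 1) / 2) = orderOf t + 1 := by
      obtain ⟨j, hj⟩ := hoddn; omega
    rw [h, pow_succ, pow_orderOf_eq_one, one_mul]
  rw [ht']
  exact Subgroup.pow_mem _ h2 _

theorem stmt10 (p : ℕ) (hp : p.Prime) (hodd : Odd p)
    (G : Type*) [Group G] [Finite G] (hpG : IsPGroup p G) (hna : ∃ a b : G, a * b ≠ b * a)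
    (T : Set G) (hT : IsCenterTransversal G T) (hsrg : ∃ v k l m, IsSRG (TGraph G T) v k l m) :
    ¬ (TGraph G T).Connected := by
  intro hconn
  obtain ⟨v, k, l, m, hv, hk0, hkv, hdeg, hlam, hmu⟩ := hsrg
  have hAdj : ∀ x y : ↥(T \ (Subgroup.center G : Set G)),
      (TGraph G T).Adj x y ↔ x ≠ y ∧ (x : G) * y = (y : G) * x := fun _ _ => Iff.rfl
  -- pick a vertex
  obtain ⟨x0⟩ := hconn.nonempty
  have htZ : (x0 : G) ∉ Subgroup.center G := x0.2.2
  have h2Z : (x0 : G) ^ 2 ∉ Subgroup.center G := sq_not_center' hp hodd hpG htZ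
  obtain ⟨s, ⟨hsT, hsz⟩, -⟩ := hT ((x0 : G) ^ 2)
  set z : G := ((x0 : G) ^ 2)⁻¹ * s with hzdef
  have hs_eq : s = (x0 : G) ^ 2 * z := by rw [hzdef, mul_inv_cancel_left]
  have hzc : ∀ g : G, g * z = z * g := fun g => Subgroup.mem_center_iff.mp hsz g
  have hsZ : s ∉ Subgroup.center G := by
    intro hs
    apply h2Z
    have : (x0 : G) ^ 2 = s * z⁻¹ := by rw [hs_eq, mul_inv_cancel_right]
    rw [this]
    exact mul_mem hs (inv_mem hsz)
  set S : ↥(T \ (Subgroup.center G : Set G)) := ⟨s, hsT, hsZ⟩ with hSdef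
  have hne : (x0 : G) ≠ s := by
    intro h
    apply htZ
    have heq : ((x0 : G) ^ 2)⁻¹ * (x0 : G) = (x0 : G)⁻¹ := by
      rw [pow_two, mul_inv_rev, mul_assoc, inv_mul_cancel, mul_one]
    have hsz' : ((x0 : G) ^ 2)⁻¹ * s ∈ Subgroup.center G := hsz
    rw [← h] at hsz'
    rw [heq] at hsz'
    exact (Subgroup.inv_mem_iff _).mp hsz'
  have hcommimp : ∀ u : G, u * (x0 : G) = (x0 : G) * u → u * s = s * u := by
    intro u hu
    have c0 : Commute u ((x0 : G)) := hu
    have c1 : Commute u ((x0 : G) ^ 2) := c0.pow_right 2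
    have c2 : Commute u z := hzc u
    have := c1.mul_right c2
    rw [hs_eq]; exact this
  have hadjS : (TGraph G T).Adj x0 S := by
    rw [hAdj]
    refine ⟨fun h => hne (congrArg Subtype.val h), ?_⟩
    have := hcommimp (x0 : G) rfl
    exact this
  -- ncard of neighborSet minus a neighbor
  have hdiff : ∀ x y : ↥(T \ (Subgroup.center G : Set G)), (TGraph G T).Adj x y →
      ((TGraph G T).neighborSet x \ {y}).ncard = k - 1 := by
    intro x y hxy
    have hy : y ∈ (TGraph G T).neighborSet x := hxy
    rw [Set.ncard_diff_singleton_of_mem hy, hdeg x]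
  -- the special pair gives l = k - 1
  have hset : (TGraph G T).neighborSet x0 ∩ (TGraph G T).neighborSet S
      = (TGraph G T).neighborSet x0 \ {S} := by
    ext u
    simp only [Set.mem_inter_iff, Set.mem_diff, Set.mem_singleton_iff,
      SimpleGraph.mem_neighborSet]
    constructor
    · rintro ⟨h1, h2⟩
      refine ⟨h1, fun h => (TGraph G T).irrefl (h ▸ h2)⟩
    · rintro ⟨h1, h2⟩
      refine ⟨h1, ?_⟩
      rw [hAdj] at h1 ⊢
      obtain ⟨hne1, hc1⟩ := h1
      refine ⟨fun h => h2 h.symm, ?_⟩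
      have : (u : G) * s = s * (u : G) := hcommimp u hc1.symm
      exact this.symm
  have hl : l = k - 1 := by
    have h1 := hlam x0 S hadjS
    rw [hset, hdiff x0 S hadjS] at h1
    exact h1.symm
  -- general step: neighbors transfer along edges
  have hstep : ∀ x y : ↥(T \ (Subgroup.center G : Set G)), (TGraph G T).Adj x y →
      ∀ u, (TGraph G T).Adj x u → u ≠ y → (TGraph G T).Adj y u := by
    intro x y hxy u hxu huy
    have hsub : (TGraph G T).neighborSet x ∩ (TGraph G T).neighborSet y
        ⊆ (TGraph G T).neighborSet x \ {y} := by
      rintro w ⟨h1, h2⟩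
      refine ⟨h1, fun h => ?_⟩
      have hw : w = y := h
      exact (TGraph G T).irrefl (hw ▸ h2)
    have hle : ((TGraph G T).neighborSet x \ {y}).ncard ≤
        ((TGraph G T).neighborSet x ∩ (TGraph G T).neighborSet y).ncard := by
      rw [hdiff x y hxy, hlam x y hxy, hl]
    have heq := Set.eq_of_subset_of_ncard_le hsub hle
    have hmem : u ∈ (TGraph G T).neighborSet x \ {y} := ⟨hxu, by simpa using huy⟩
    rw [← heq] at hmem
    exact hmem.2
  -- the component of x0 is contained in a clique of size k+1
  set S0 : Set ↥(T \ (Subgroup.center G : Set G)) :=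
    insert x0 ((TGraph G T).neighborSet x0) with hS0def
  have hclosed : ∀ a b : ↥(T \ (Subgroup.center G : Set G)),
      a ∈ S0 → (TGraph G T).Adj a b → b ∈ S0 := by
    intro a b ha hab
    rcases ha with ha | ha
    · exact Set.mem_insert_iff.mpr (Or.inr (ha ▸ hab))
    · by_cases hbx : b = x0
      · exact hbx ▸ Set.mem_insert _ _
      · have hax : (TGraph G T).Adj a x0 := ((SimpleGraph.mem_neighborSet _ _ _).mp ha).symm
        exact Set.mem_insert_iff.mpr (Or.inr (hstep a x0 hax b hab hbx))
  have hreach : ∀ b, (TGraph G T).Reachable x0 b → b ∈ S0 := by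
    intro b hb
    obtain ⟨w⟩ := hb
    have key : ∀ (a c : ↥(T \ (Subgroup.center G : Set G)))
        (w : (TGraph G T).Walk a c), a ∈ S0 → c ∈ S0 := by
      intro a c w
      induction w with
      | nil => exact id
      | cons h _ ih => exact fun ha => ih (hclosed _ _ ha h)
    exact key _ _ w (Set.mem_insert _ _)
  have hx0nmem : x0 ∉ (TGraph G T).neighborSet x0 := fun h => (TGraph G T).irrefl h
  have hcardS0 : S0.ncard = k + 1 := by
    rw [hS0def, Set.ncard_insert_of_notMem hx0nmem, hdeg x0]
  have hexz : ∃ w, w ∉ S0 := by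
    by_contra h
    push_neg at h
    have : S0 = Set.univ := Set.eq_univ_iff_forall.mpr h
    rw [this, Set.ncard_univ, hv] at hcardS0
    omega
  obtain ⟨w, hw⟩ := hexz
  exact hw (hreach w (hconn.preconnected x0 w))
end

section
/- Let G be a finite non-abelian 2-group such that T(G) is a connected strongly regular graph with parameters (v,k,λ,μ), and suppose |C_G(x) ∩ C_G(y)| is the same for all pairs of distinct vertices x ≠ y of T(G). Then G has conjugate type {1,2}, i.e., [G : C_G(x)] = 2 for every non-central x ∈ G. -/
open scoped commutatorElement

open Pointwise Subgroup

lemma nt_lemma {a b c : ℕ} (hb : 2 ≤ b) (hab : a ≤ b) (hbc : b < c)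
    (heq : (2^c - 2) * 2^a = (2^c - 2) + (2^b - 1) * (2^b - 2)) : c = b + 1 := by
  obtain ⟨b', rfl⟩ : ∃ b', b = b' + 1 := ⟨b - 1, by omega⟩
  obtain ⟨e, rfl⟩ : ∃ e, c = b' + 2 + e := ⟨c - (b' + 2), by omega⟩
  have hb' : 1 ≤ b' := by omega
  have h1 : (2:ℕ) ≤ 2 ^ (b' + 2 + e) := by
    calc (2:ℕ) = 2^1 := rfl
    _ ≤ _ := Nat.pow_le_pow_right (by norm_num) (by omega)
  have h3 : (2:ℕ) ≤ 2 ^ (b' + 1) := by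
    calc (2:ℕ) = 2^1 := rfl
    _ ≤ _ := Nat.pow_le_pow_right (by norm_num) (by omega)
  have h2 : (1:ℕ) ≤ 2 ^ (b' + 1) := by omega
  zify [h1, h2, h3] at heq
  set A : ℤ := 2^a with hA
  set B : ℤ := 2^b' with hB
  set E : ℤ := 2^e with hE
  have hpow1 : (2:ℤ)^(b'+2+e) = 4 * B * E := by rw [hB, hE]; ring
  have hpow2 : (2:ℤ)^(b'+1) = 2 * B := by rw [hB]; ring
  rw [hpow1, hpow2] at heq
  have hApos : (1:ℤ) ≤ A := by
    have : (0:ℤ) < A := by rw [hA]; positivity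
    omega
  have hEpos : (1:ℤ) ≤ E := by
    have : (0:ℤ) < E := by rw [hE]; positivity
    omega
  have hBpos : (2:ℤ) ≤ B := by
    calc (2:ℤ) = 2^1 := by norm_num
    _ ≤ B := by rw [hB]; exact pow_le_pow_right₀ (by norm_num) hb'
  have hAle : A ≤ 2 * B := by
    rw [hA, hB, show (2:ℤ) * 2^b' = 2^(b'+1) by ring]
    exact pow_le_pow_right₀ (by norm_num) hab
  have key : (4 * B) ∣ (2*A - 2*B) := ⟨E * A - E - B + 1, by linear_combination -heq⟩
  have hz : 2*A - 2*B = 0 := by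
    refine Int.eq_zero_of_dvd_of_natAbs_lt_natAbs key ?_
    omega
  have hAB : A = B := by omega
  have hcancel : 4 * B * E = 4 * B := by
    have hBne : B - 1 ≠ 0 := by omega
    refine mul_left_cancel₀ hBne ?_
    rw [hAB] at heq
    linear_combination heq
  have hE1 : E = 1 := by
    have hBne : (4 : ℤ) * B ≠ 0 := by omega
    have h4 : 4 * B * E = 4 * B * 1 := by omega
    exact mul_left_cancel₀ hBne h4
  have : e = 0 := by
    by_contra h
    have h5 : (2:ℤ)^1 ≤ 2^e := pow_le_pow_right₀ (by norm_num) (by omega)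
    rw [← hE] at h5; omega
  omega


lemma transversal_unique {G : Type*} [Group G] {T : Set G} (hT : IsCenterTransversal G T) {t₁ t₂ : G} (h1 : t₁ ∈ T) (h2 : t₂ ∈ T)
    (h : t₁⁻¹ * t₂ ∈ Subgroup.center G) : t₁ = t₂ := by
  have e1 : t₁ ∈ T ∧ t₁⁻¹ * t₁ ∈ Subgroup.center G := ⟨h1, by simpa using (Subgroup.center G).one_mem⟩
  exact (hT t₁).unique e1 ⟨h2, h⟩

lemma transversal_card {G : Type*} [Group G] [Finite G] {T : Set G} (hT : IsCenterTransversal G T) (H : Subgroup G)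
    (hZH : Subgroup.center G ≤ H) :
    (T ∩ (H : Set G)).ncard * Nat.card (Subgroup.center G) = Nat.card H := by
  have hb : Function.Bijective (fun p : ↥(T ∩ (H : Set G)) × ↥(Subgroup.center G) =>
      (⟨p.1.1 * p.2.1, H.mul_mem p.1.2.2 (hZH p.2.2)⟩ : H)) := by
    constructor
    · rintro ⟨⟨t₁, ht₁T, ht₁H⟩, ⟨z₁, hz₁⟩⟩ ⟨⟨t₂, ht₂T, ht₂H⟩, ⟨z₂, hz₂⟩⟩ h
      simp only [Subtype.mk.injEq] at h
      have ht : t₁ = t₂ := by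
        refine transversal_unique hT ht₁T ht₂T ?_
        have : t₁⁻¹ * t₂ = z₁ * z₂⁻¹ := by
          have : t₂ = t₁ * z₁ * z₂⁻¹ := by rw [h]; group
          rw [this]; group
        rw [this]
        exact (Subgroup.center G).mul_mem hz₁ ((Subgroup.center G).inv_mem hz₂)
      subst ht
      have hz : z₁ = z₂ := by
        have := mul_left_cancel h
        simpa using this
      simp [hz]
    · rintro ⟨h, hH⟩
      obtain ⟨t, ⟨htT, htZ⟩, -⟩ := hT h
      have htH : t ∈ H := by
        have : t = h * (h⁻¹ * t) := by group
        rw [this]; exact H.mul_mem hH (hZH htZ)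
      refine ⟨⟨⟨t, htT, htH⟩, ⟨t⁻¹ * h, ?_⟩⟩, ?_⟩
      · have : t⁻¹ * h = (h⁻¹ * t)⁻¹ := by group
        rw [this]; exact (Subgroup.center G).inv_mem htZ
      · ext; simp
  have := Nat.card_eq_of_bijective _ hb
  rw [Nat.card_prod] at this
  rw [← this, Nat.card_coe_set_eq]


theorem stmt12 (G : Type*) [Group G] [Finite G] (h2 : IsPGroup 2 G) (hna : ∃ a b : G, a * b ≠ b * a)
    (T : Set G) (hT : IsCenterTransversal G T) (v k l m : ℕ)
    (hsrg : IsSRG (TGraph G T) v k l m) (hconn : (TGraph G T).Connected)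
    (hconst : ∀ x y t w : ↥(T \ (Subgroup.center G : Set G)), x ≠ y → t ≠ w →
      Nat.card (Subgroup.centralizer {(x : G)} ⊓ Subgroup.centralizer {(y : G)} : Subgroup G)
        = Nat.card (Subgroup.centralizer {(t : G)} ⊓ Subgroup.centralizer {(w : G)} : Subgroup G)) :
    ∀ x : G, x ∉ Subgroup.center G → (Subgroup.centralizer {x}).index = 2 := by
  classical
  intro x hx
  obtain ⟨hvcard, hk, hkv, hreg, -, -⟩ := hsrg
  set V := ↥(T \ (Subgroup.center G : Set G)) with hV
  have instG : Fintype G := Fintype.ofFinite G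
  have instV : Fintype V := Fintype.ofFinite V
  -- the central representative
  obtain ⟨t₀, ⟨ht₀T, ht₀Z⟩, -⟩ := hT 1
  rw [inv_one, one_mul] at ht₀Z
  -- every central element of T is t₀
  have hTZ_eq : ∀ g ∈ T, g ∈ Subgroup.center G → g = t₀ := by
    intro g hgT hgZ
    exact (transversal_unique hT ht₀T hgT
      ((Subgroup.center G).mul_mem ((Subgroup.center G).inv_mem ht₀Z) hgZ)).symm
  -- z and its positivity
  set z := Nat.card (Subgroup.center G) with hz
  have hzpos : 0 < z := Nat.card_pos
  -- degree: |T ∩ C(u)| = k + 2 for every vertex u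
  have hdeg : ∀ u : V, (T ∩ (Subgroup.centralizer {(u:G)} : Set G)).ncard = k + 2 := by
    intro u
    have himg : T ∩ (Subgroup.centralizer {(u:G)} : Set G)
        = insert (u:G) (insert t₀ (Subtype.val '' ((TGraph G T).neighborSet u))) := by
      ext g
      simp only [Set.mem_inter_iff, Set.mem_insert_iff, Set.mem_image,
        SimpleGraph.mem_neighborSet, SetLike.mem_coe, Subgroup.mem_centralizer_singleton_iff]
      constructor
      · rintro ⟨hgT, hgC⟩
        by_cases hgu : g = (u:G); · exact Or.inl hgu
        right
        by_cases hgZ : g ∈ Subgroup.center G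
        · exact Or.inl (hTZ_eq g hgT hgZ)
        · refine Or.inr ⟨⟨g, hgT, hgZ⟩, ?_, rfl⟩
          exact show (u ≠ ⟨g, hgT, hgZ⟩ ∧ (u:G) * g = g * u) from ⟨fun h => hgu (congrArg Subtype.val h).symm, hgC.symm⟩
      · rintro (rfl | rfl | ⟨y, hy, rfl⟩)
        · exact ⟨u.2.1, rfl⟩
        · exact ⟨ht₀T, (Subgroup.mem_center_iff.mp ht₀Z (u:G)).symm⟩
        · exact ⟨y.2.1, (hy : u ≠ y ∧ (u:G) * y = y * u).2.symm⟩
    have h1 : (u:G) ∉ insert t₀ (Subtype.val '' ((TGraph G T).neighborSet u)) := by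
      simp only [Set.mem_insert_iff, Set.mem_image, SimpleGraph.mem_neighborSet]
      rintro (h | ⟨y, hy, hyv⟩)
      · exact u.2.2 (h ▸ ht₀Z)
      · exact (hy : u ≠ y ∧ _).1 (Subtype.ext hyv.symm)
    have h2' : t₀ ∉ Subtype.val '' ((TGraph G T).neighborSet u) := by
      rintro ⟨y, -, hyv⟩
      exact y.2.2 (hyv ▸ ht₀Z)
    rw [himg, Set.ncard_insert_of_notMem h1 (Set.toFinite _),
      Set.ncard_insert_of_notMem h2' (Set.toFinite _),
      Set.ncard_image_of_injective _ Subtype.val_injective, hreg u]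
  -- centralizer cardinality
  have hCcard : ∀ u : V, Nat.card (Subgroup.centralizer {(u:G)}) = (k + 2) * z := by
    intro u
    rw [← transversal_card hT _ (Subgroup.center_le_centralizer _), hdeg u]
  -- number of vertices : v + 1 = index of the center
  set N := (Subgroup.center G).index with hN
  have hvN : v + 1 = N := by
    have hT_eq : T = insert t₀ (T \ (Subgroup.center G : Set G)) := by
      ext g
      constructor
      · intro hgT
        by_cases hgZ : g ∈ Subgroup.center G
        · exact Or.inl (hTZ_eq g hgT hgZ)
        · exact Or.inr ⟨hgT, hgZ⟩
      · rintro (rfl | ⟨h, -⟩) <;> [exact ht₀T; exact h]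
    have h1 : T.ncard * z = Nat.card G := by
      have h := transversal_card hT ⊤ le_top
      rw [Subgroup.coe_top, Set.inter_univ] at h
      rw [h, Subgroup.card_top]
    have h2' : N * z = Nat.card G := Subgroup.index_mul_card _
    have h3 : T.ncard = v + 1 := by
      rw [hT_eq, Set.ncard_insert_of_notMem (fun h => h.2 ht₀Z) (Set.toFinite _)]
      rw [← hvcard, hV, Nat.card_coe_set_eq]
    have : (v + 1) * z = N * z := by rw [← h3, h1, h2']
    exact Nat.eq_of_mul_eq_mul_right hzpos this
  -- the vertex representing x
  obtain ⟨tx, ⟨htxT, htxZ⟩, -⟩ := hT x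
  have htxnc : tx ∉ Subgroup.center G := by
    intro h
    apply hx
    have : x = tx * (x⁻¹ * tx)⁻¹ := by group
    rw [this]
    exact (Subgroup.center G).mul_mem h ((Subgroup.center G).inv_mem htxZ)
  set x₀ : V := ⟨tx, htxT, htxnc⟩ with hx₀
  have hCx_eq : Subgroup.centralizer {x} = Subgroup.centralizer {tx} := by
    have hcom : ∀ w : G, w * (x⁻¹ * tx) = (x⁻¹ * tx) * w :=
      fun w => (Subgroup.mem_center_iff.mp htxZ w)
    have htxeq : tx = x * (x⁻¹ * tx) := by group
    ext g
    simp only [Subgroup.mem_centralizer_singleton_iff]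
    rw [show g * tx = (g * x) * (x⁻¹ * tx) by group,
      show tx * g = x * ((x⁻¹ * tx) * g) by group, ← hcom g,
      show x * (g * (x⁻¹ * tx)) = (x * g) * (x⁻¹ * tx) by group,
      mul_left_inj]
  -- the constant M
  have hv2 : 1 < Nat.card V := by rw [hvcard]; omega
  have : Nontrivial V := by
    rw [Nat.card_eq_fintype_card] at hv2
    exact Fintype.one_lt_card_iff_nontrivial.mp hv2
  obtain ⟨y₁, hy₁⟩ := exists_ne x₀
  set M := (T ∩ ((Subgroup.centralizer {(x₀:G)} ⊓ Subgroup.centralizer {(y₁:G)} : Subgroup G) : Set G)).ncard with hM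
  have hMc : ∀ y : V, y ≠ x₀ →
      (T ∩ ((Subgroup.centralizer {(x₀:G)} ⊓ Subgroup.centralizer {(y:G)} : Subgroup G) : Set G)).ncard = M := by
    intro y hy
    have hle : Subgroup.center G ≤ Subgroup.centralizer {(x₀:G)} ⊓ Subgroup.centralizer {(y:G)} :=
      le_inf (Subgroup.center_le_centralizer _) (Subgroup.center_le_centralizer _)
    have hle1 : Subgroup.center G ≤ Subgroup.centralizer {(x₀:G)} ⊓ Subgroup.centralizer {(y₁:G)} :=
      le_inf (Subgroup.center_le_centralizer _) (Subgroup.center_le_centralizer _)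
    have e1 := transversal_card hT _ hle
    have e2 := transversal_card hT _ hle1
    have e3 := hconst x₀ y x₀ y₁ (Ne.symm hy) (Ne.symm hy₁)
    rw [e3, ← e2] at e1
    exact Nat.eq_of_mul_eq_mul_right hzpos e1
  -- DOUBLE COUNTING
  set P : Finset (V × G) := Finset.univ.filter
    (fun p => p.1 ≠ x₀ ∧ p.2 ∈ T ∧ p.2 * (x₀:G) = (x₀:G) * p.2 ∧ p.2 * (p.1:G) = (p.1:G) * p.2)
    with hP
  set Sx : Finset G := Finset.univ.filter (fun t => t ∈ T ∧ t * (x₀:G) = (x₀:G) * t) with hSx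
  have hSxcard : Sx.card = k + 2 := by
    have hseteq : ((Sx : Finset G) : Set G) = T ∩ ((Subgroup.centralizer {(x₀:G)} : Subgroup G) : Set G) := by
      ext g
      simp [hSx, Subgroup.mem_centralizer_singleton_iff]
    calc Sx.card = ((Sx : Finset G) : Set G).ncard := (Set.ncard_coe_finset _).symm
      _ = k + 2 := by rw [hseteq, hdeg x₀]
  have hvero : (Finset.univ.erase x₀).card = v - 1 := by
    rw [Finset.card_erase_of_mem (Finset.mem_univ _), Finset.card_univ,
      ← Nat.card_eq_fintype_card, hvcard]
  -- row count
  have hrow : P.card = (v - 1) * M := by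
    have h1 : ∀ p ∈ P, p.1 ∈ Finset.univ.erase x₀ := by
      intro p hp
      simp only [hP, Finset.mem_filter] at hp
      exact Finset.mem_erase.mpr ⟨hp.2.1, Finset.mem_univ _⟩
    rw [Finset.card_eq_sum_card_fiberwise h1]
    have h2 : ∀ y ∈ Finset.univ.erase x₀, (P.filter (fun p => p.1 = y)).card = M := by
      intro y hy
      have hyne : y ≠ x₀ := (Finset.mem_erase.mp hy).1
      have hbij : (P.filter (fun p => p.1 = y)).card
          = (Finset.univ.filter
              (fun t : G => t ∈ T ∧ t * (x₀:G) = (x₀:G) * t ∧ t * (y:G) = (y:G) * t)).card := by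
        refine Finset.card_nbij' Prod.snd (fun t => (y, t)) ?_ ?_ ?_ ?_
        · intro p hp
          obtain ⟨hpP, h5⟩ := Finset.mem_filter.mp hp
          obtain ⟨-, h1', h2', h3', h4'⟩ := Finset.mem_filter.mp hpP
          refine Finset.mem_filter.mpr ⟨Finset.mem_univ _, h2', h3', ?_⟩
          rw [← h5]; exact h4'
        · intro t ht
          obtain ⟨-, ht1, ht2, ht3⟩ := Finset.mem_filter.mp ht
          refine Finset.mem_filter.mpr ⟨?_, rfl⟩
          exact Finset.mem_filter.mpr ⟨Finset.mem_univ _, hyne, ht1, ht2, ht3⟩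
        · intro p hp
          obtain ⟨-, h5⟩ := Finset.mem_filter.mp hp
          exact (Prod.ext_iff.mpr ⟨h5.symm, rfl⟩)
        · intro t ht
          rfl
      have hset2 : ((Finset.univ.filter
            (fun t : G => t ∈ T ∧ t * (x₀:G) = (x₀:G) * t ∧ t * (y:G) = (y:G) * t) : Finset G) : Set G)
          = T ∩ ((Subgroup.centralizer {(x₀:G)} ⊓ Subgroup.centralizer {(y:G)} : Subgroup G) : Set G) := by
        ext g
        simp only [Finset.coe_filter, Finset.mem_univ, true_and, Set.mem_setOf_eq,
          Set.mem_inter_iff, SetLike.mem_coe, Subgroup.mem_inf,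
          Subgroup.mem_centralizer_singleton_iff]
      rw [hbij, ← Set.ncard_coe_finset, hset2, hMc y hyne]
    rw [Finset.sum_congr rfl h2, Finset.sum_const, smul_eq_mul, hvero]
  -- column count
  have hcol : P.card = (v - 1) + (k + 1) * k := by
    have hcm : ∀ p ∈ P, p.2 ∈ Sx := by
      intro p hp
      simp only [hP, Finset.mem_filter] at hp
      simp only [hSx, Finset.mem_filter]
      exact ⟨Finset.mem_univ _, hp.2.2.1, hp.2.2.2.1⟩
    rw [Finset.card_eq_sum_card_fiberwise hcm]
    have hfib : ∀ t ∈ Sx, (P.filter (fun p => p.2 = t)).card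
        = (Finset.univ.filter (fun y : V => y ≠ x₀ ∧ t * (y:G) = (y:G) * t)).card := by
      intro t ht
      simp only [hSx, Finset.mem_filter, Finset.mem_univ, true_and] at ht
      refine Finset.card_nbij' Prod.fst (fun y => (y, t)) ?_ ?_ ?_ ?_
      · intro p hp
        obtain ⟨hpP, h5⟩ := Finset.mem_filter.mp hp
        obtain ⟨-, h1', h2', h3', h4'⟩ := Finset.mem_filter.mp hpP
        refine Finset.mem_filter.mpr ⟨Finset.mem_univ _, h1', ?_⟩
        rw [← h5]; exact h4'
      · intro y hy
        obtain ⟨-, hy1, hy2⟩ := Finset.mem_filter.mp hy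
        refine Finset.mem_filter.mpr ⟨?_, rfl⟩
        exact Finset.mem_filter.mpr ⟨Finset.mem_univ _, hy1, ht.1, ht.2, hy2⟩
      · intro p hp
        obtain ⟨-, h5⟩ := Finset.mem_filter.mp hp
        exact (Prod.ext_iff.mpr ⟨rfl, h5.symm⟩)
      · intro y hy
        rfl
    rw [Finset.sum_congr rfl hfib]
    have ht₀Sx : t₀ ∈ Sx := by
      simp only [hSx, Finset.mem_filter]
      exact ⟨Finset.mem_univ _, ht₀T, (Subgroup.mem_center_iff.mp ht₀Z _).symm⟩
    rw [← Finset.add_sum_erase _ _ ht₀Sx]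
    have hft₀ : (Finset.univ.filter (fun y : V => y ≠ x₀ ∧ t₀ * (y:G) = (y:G) * t₀)).card = v - 1 := by
      have heq1 : (Finset.univ.filter (fun y : V => y ≠ x₀ ∧ t₀ * (y:G) = (y:G) * t₀))
          = Finset.univ.erase x₀ := by
        ext y
        simp [Finset.mem_erase, (Subgroup.mem_center_iff.mp ht₀Z _).symm]
      rw [heq1, hvero]
    have hother : ∀ t ∈ Sx.erase t₀,
        (Finset.univ.filter (fun y : V => y ≠ x₀ ∧ t * (y:G) = (y:G) * t)).card = k := by
      intro t ht
      obtain ⟨htne, htSx⟩ := Finset.mem_erase.mp ht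
      simp only [hSx, Finset.mem_filter, Finset.mem_univ, true_and] at htSx
      obtain ⟨htT', htC⟩ := htSx
      have htnc : t ∉ Subgroup.center G := fun h => htne (hTZ_eq t htT' h)
      set tv : V := ⟨t, htT', htnc⟩ with htv
      have hcomm : (Finset.univ.filter (fun y : V => t * (y:G) = (y:G) * t)).card = k + 1 := by
        have hseteq : {y : V | t * (y:G) = (y:G) * t} = insert tv ((TGraph G T).neighborSet tv) := by
          ext y
          simp only [Set.mem_setOf_eq, Set.mem_insert_iff, SimpleGraph.mem_neighborSet]
          constructor
          · intro hc
            by_cases hyt : y = tv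
            · exact Or.inl hyt
            · exact Or.inr (show tv ≠ y ∧ (tv:G) * y = y * tv from ⟨fun h => hyt h.symm, hc⟩)
          · rintro (rfl | hadj)
            · rfl
            · exact (hadj : tv ≠ y ∧ (tv:G) * y = y * tv).2
        have hni : tv ∉ (TGraph G T).neighborSet tv := fun h => (TGraph G T).loopless.irrefl tv h
        calc (Finset.univ.filter (fun y : V => t * (y:G) = (y:G) * t)).card
            = {y : V | t * (y:G) = (y:G) * t}.ncard := by
              rw [← Set.ncard_coe_finset]
              congr 1
              ext y
              simp
          _ = (insert tv ((TGraph G T).neighborSet tv)).ncard := by rw [hseteq]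
          _ = k + 1 := by rw [Set.ncard_insert_of_notMem hni (Set.toFinite _), hreg tv]
      have hx₀mem : x₀ ∈ Finset.univ.filter (fun y : V => t * (y:G) = (y:G) * t) := by
        simp only [Finset.mem_filter]
        exact ⟨Finset.mem_univ _, htC⟩
      have herase : Finset.univ.filter (fun y : V => y ≠ x₀ ∧ t * (y:G) = (y:G) * t)
          = (Finset.univ.filter (fun y : V => t * (y:G) = (y:G) * t)).erase x₀ := by
        ext y
        simp only [Finset.mem_filter, Finset.mem_erase, Finset.mem_univ, true_and]
      rw [herase, Finset.card_erase_of_mem hx₀mem, hcomm]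
      omega
    rw [hft₀, Finset.sum_congr rfl hother, Finset.sum_const, smul_eq_mul,
      Finset.card_erase_of_mem ht₀Sx, hSxcard]
    have hk21 : k + 2 - 1 = k + 1 := by omega
    rw [hk21]
  -- the master equation
  have heqn0 : (v - 1) * M = (v - 1) + (k + 1) * k := by rw [← hrow, hcol]
  -- powers of two
  have hfact : Fact (Nat.Prime 2) := ⟨Nat.prime_two⟩
  obtain ⟨n, hn⟩ := IsPGroup.iff_card.mp h2
  have hle1 : Subgroup.center G ≤ Subgroup.centralizer {(x₀:G)} ⊓ Subgroup.centralizer {(y₁:G)} :=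
    le_inf (Subgroup.center_le_centralizer _) (Subgroup.center_le_centralizer _)
  have hMz : M * z = Nat.card (Subgroup.centralizer {(x₀:G)} ⊓ Subgroup.centralizer {(y₁:G)} : Subgroup G) :=
    transversal_card hT _ hle1
  have hNz : N * z = Nat.card G := Subgroup.index_mul_card _
  have hKz : (k + 2) * z = Nat.card (Subgroup.centralizer {(x₀:G)}) := (hCcard x₀).symm
  -- divisibility into 2^n
  have hKdvd : (k + 2) ∣ 2 ^ n := by
    refine dvd_trans (dvd_mul_right (k + 2) z) ?_
    rw [hKz, ← hn]
    exact Subgroup.card_subgroup_dvd_card _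
  have hMdvd : M ∣ 2 ^ n := by
    refine dvd_trans (dvd_mul_right M z) ?_
    rw [hMz, ← hn]
    exact Subgroup.card_subgroup_dvd_card _
  have hNdvd : N ∣ 2 ^ n := by
    refine dvd_trans (dvd_mul_right N z) ?_
    rw [hNz, hn]
  obtain ⟨b, hbn, hKb⟩ := (Nat.dvd_prime_pow Nat.prime_two).mp hKdvd
  obtain ⟨a, han, hMa⟩ := (Nat.dvd_prime_pow Nat.prime_two).mp hMdvd
  obtain ⟨c, hcn, hNc⟩ := (Nat.dvd_prime_pow Nat.prime_two).mp hNdvd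
  -- a ≤ b
  have hab : a ≤ b := by
    have hdvd1 : M * z ∣ (k + 2) * z := by
      rw [hMz, hKz]
      exact Subgroup.card_dvd_of_le inf_le_left
    have : M ∣ k + 2 := (Nat.mul_dvd_mul_iff_right hzpos).mp hdvd1
    rw [hMa, hKb] at this
    exact (Nat.pow_dvd_pow_iff_le_right (by norm_num : 1 < 2)).mp this
  -- b < c
  have hbc : b < c := by
    have hdvd2 : (k + 2) * z ∣ N * z := by
      rw [hKz, hNz]
      exact Subgroup.card_subgroup_dvd_card _
    have hd : (k + 2) ∣ N := (Nat.mul_dvd_mul_iff_right hzpos).mp hdvd2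
    have hne : (k + 2) ≠ N := by
      intro h
      have hcard : Nat.card (Subgroup.centralizer {(x₀:G)}) = Nat.card G := by
        rw [← hKz, h, hNz]
      have htop := Subgroup.eq_top_of_card_eq _ hcard
      apply htxnc
      rw [Subgroup.mem_center_iff]
      intro g
      have : g ∈ Subgroup.centralizer {(x₀:G)} := htop ▸ Subgroup.mem_top g
      exact Subgroup.mem_centralizer_singleton_iff.mp this
    rw [hKb, hNc] at hd hne
    have hle' : b ≤ c := (Nat.pow_dvd_pow_iff_le_right (by norm_num : 1 < 2)).mp hd
    have hbne : b ≠ c := by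
      intro h'
      exact hne (by rw [h'])
    omega
  -- 2 ≤ b
  have hb2 : 2 ≤ b := by
    have h3 : 3 ≤ 2 ^ b := by rw [← hKb]; omega
    by_contra hlt
    have : 2 ^ b ≤ 2 ^ 1 := Nat.pow_le_pow_right (by norm_num) (by omega)
    omega
  -- rewrite master equation in powers of two
  have heqn : (2 ^ c - 2) * 2 ^ a = (2 ^ c - 2) + (2 ^ b - 1) * (2 ^ b - 2) := by
    have hveq : v + 1 = 2 ^ c := by rw [hvN, hNc]
    have hkeq : k + 2 = 2 ^ b := hKb
    rw [hMa] at heqn0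
    rw [show v - 1 = 2 ^ c - 2 by omega, show k + 1 = 2 ^ b - 1 by omega,
      show k = 2 ^ b - 2 by omega] at heqn0
    exact heqn0
  have hc : c = b + 1 := nt_lemma hb2 hab hbc heqn
  -- conclusion
  rw [hCx_eq]
  have hidx : (Subgroup.centralizer {(x₀:G)}).index * Nat.card (Subgroup.centralizer {(x₀:G)})
      = Nat.card G := Subgroup.index_mul_card _
  rw [hCcard x₀] at hidx
  have hGeq : Nat.card G = 2 * ((k + 2) * z) := by
    rw [← hNz, hNc, hc, hKb, pow_succ, mul_comm (2^b) 2, mul_assoc]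
  rw [hGeq] at hidx
  have hpos : 0 < (k + 2) * z := by positivity
  have : (Subgroup.centralizer {tx}).index = (Subgroup.centralizer {(x₀:G)}).index := rfl
  rw [this]
  exact Nat.eq_of_mul_eq_mul_right hpos hidx
end

section
/- There is no strongly regular graph with parameters (2^{2s+1} − 1, 2^{s+1} − 2, 2^s − 3, 1) for any integer s ≥ 2. -/
open scoped commutatorElement

open Pointwise Subgroup

open Polynomial in
private lemma norat1 (m : ℕ) (x : ℚ) : x ^ 2 ≠ (4:ℚ) ^ m + 1 := by
  intro h
  have hsq : IsSquare ((4 ^ m + 1 : ℕ) : ℚ) := ⟨x, by push_cast; rw [← h]; ring⟩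
  rw [Rat.isSquare_natCast_iff] at hsq
  obtain ⟨n, hn⟩ := hsq
  have h4 : (4:ℕ) ^ m = 2 ^ m * 2 ^ m := by
    rw [show (4:ℕ) = 2 * 2 by norm_num, mul_pow]
  have hp : 1 ≤ (2:ℕ) ^ m := Nat.one_le_two_pow
  rw [h4] at hn
  rcases le_or_gt n (2 ^ m) with hle | hlt
  · nlinarith
  · nlinarith

private lemma norat4 {s : ℕ} (hs : 1 ≤ s) (x : ℚ) : x ^ 2 ≠ (4:ℚ) ^ s + 4 := by
  intro h
  obtain ⟨m, rfl⟩ := Nat.exists_eq_add_of_le hs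
  apply norat1 m (x / 2)
  rw [div_pow, h, pow_add, pow_one]
  ring

open Polynomial Matrix in
private lemma eval_eq_zero_of_root_charpoly {n : Type*} [Fintype n] [DecidableEq n] {K : Type*}
    [Field K] (M : Matrix n n K) (p : K[X]) (hp : Polynomial.aeval M p = 0) (r : K)
    (hr : M.charpoly.IsRoot r) : p.eval r = 0 := by
  have hsc : (Matrix.scalar n r : Matrix n n K) = r • (1 : Matrix n n K) := by
    rw [Matrix.scalar_apply, Matrix.smul_one_eq_diagonal]
  have hdet : (r • (1 : Matrix n n K) - M).det = 0 := by
    have h1 : M.charpoly.eval r = (r • (1 : Matrix n n K) - M).det := by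
      rw [Matrix.charpoly, eval_det, matPolyEquiv_charmatrix, ← hsc]
      simp
    rw [← h1]
    exact hr
  obtain ⟨x, hx0, hxv⟩ := (Matrix.exists_mulVec_eq_zero_iff).mpr hdet
  have hMx : M.mulVec x = r • x := by
    rw [Matrix.sub_mulVec, Matrix.smul_mulVec, Matrix.one_mulVec] at hxv
    exact (sub_eq_zero.mp hxv).symm
  have hfx : (Matrix.toLinAlgEquiv' M) x = r • x := by
    rw [Matrix.toLinAlgEquiv'_apply, hMx]
  have hev : Module.End.HasEigenvector (Matrix.toLinAlgEquiv' M) r x :=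
    ⟨Module.End.mem_eigenspace_iff.mpr hfx, hx0⟩
  have h2 := Module.End.aeval_apply_of_hasEigenvector (p := p) hev
  have h3 : (Polynomial.aeval (Matrix.toLinAlgEquiv' M)) p
      = Matrix.toLinAlgEquiv' (Polynomial.aeval M p) :=
    aeval_algHom_apply (Matrix.toLinAlgEquiv' (R := K) (n := n) : _ ≃ₐ[K] _).toAlgHom M p
  rw [h3, hp, map_zero, LinearMap.zero_apply] at h2
  rcases smul_eq_zero.mp h2.symm with h | h
  · exact h
  · exact absurd h hx0

open Polynomial in
theorem stmt13 (s : ℕ) (hs : 2 ≤ s) (V : Type*) (G : SimpleGraph V) :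
    ¬ IsSRG G (2 ^ (2 * s + 1) - 1) (2 ^ (s + 1) - 2) (2 ^ s - 3) 1 := by
  rintro ⟨hcard, hk0, hkv, hdeg, hadj, hnadj⟩
  classical
  have h2s : 4 ≤ 2 ^ s := by
    calc (4:ℕ) = 2 ^ 2 := by norm_num
    _ ≤ 2 ^ s := Nat.pow_le_pow_right (by norm_num) hs
  have h2s1 : 2 ≤ 2 ^ (s+1) := by
    calc (2:ℕ) = 2 ^ 1 := by norm_num
    _ ≤ 2 ^ (s+1) := Nat.pow_le_pow_right (by norm_num) (by omega)
  have hvpos : 0 < Nat.card V := by rw [hcard]; omega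
  haveI hfin : Finite V := (Nat.card_pos_iff.mp hvpos).2
  haveI : Fintype V := Fintype.ofFinite V
  haveI : DecidableRel G.Adj := Classical.decRel _
  have hVcard : Fintype.card V = 2 ^ (2 * s + 1) - 1 := by
    rw [← Nat.card_eq_fintype_card]; exact hcard
  have hsrg : G.IsSRGWith (2 ^ (2 * s + 1) - 1) (2 ^ (s + 1) - 2) (2 ^ s - 3) 1 := by
    refine ⟨hVcard, fun x => ?_, fun x y hxy => ?_, fun x y hne h' => ?_⟩
    · rw [← SimpleGraph.card_neighborSet_eq_degree, ← Nat.card_eq_fintype_card,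
        Nat.card_coe_set_eq]
      exact hdeg x
    · rw [← Nat.card_eq_fintype_card, Nat.card_coe_set_eq]
      exact hadj x y hxy
    · rw [← Nat.card_eq_fintype_card, Nat.card_coe_set_eq]
      exact hnadj x y hne h'
  set A : Matrix V V ℚ := G.adjMatrix ℚ with hA
  set Jm : Matrix V V ℚ := Matrix.of (fun _ _ => (1:ℚ)) with hJm
  set u : ℚ := (2:ℚ) ^ s with hu
  have hu4 : (4:ℚ) ≤ u := by rw [hu]; exact_mod_cast h2s
  set kq : ℚ := 2 * u - 2 with hkqdef
  set cq : ℚ := u - 4 with hcqdef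
  set dq : ℚ := 2 * u - 3 with hdqdef
  have hkq : ((2 ^ (s+1) - 2 : ℕ) : ℚ) = kq := by
    rw [hkqdef, Nat.cast_sub h2s1]; push_cast [pow_succ]; rw [hu]; ring
  have hlq : ((2 ^ s - 3 : ℕ) : ℚ) = u - 3 := by
    rw [Nat.cast_sub (by omega)]; push_cast; rw [hu]
  have hcompl : Gᶜ.adjMatrix ℚ = Jm - 1 - A := by
    ext i j
    by_cases hij : i = j
    · subst hij; simp [hJm, hA]
    · by_cases ha : G.Adj i j <;>
        simp [hJm, hA, hij, ha, Matrix.one_apply, Ne.symm hij]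
  have hme := hsrg.matrix_eq (α := ℚ)
  rw [← hA, pow_two, hcompl, one_smul] at hme
  have hme' : A * A = kq • (1 : Matrix V V ℚ) + (u - 3) • A + (Jm - 1 - A) := by
    rw [hme, ← Nat.cast_smul_eq_nsmul ℚ, ← Nat.cast_smul_eq_nsmul ℚ, hkq, hlq]
  have hq : A * A - cq • A - dq • (1 : Matrix V V ℚ) = Jm := by
    rw [hme', hkqdef, hcqdef, hdqdef]; module
  have hAJ : A * Jm = kq • Jm := by
    ext i j
    rw [hA, SimpleGraph.adjMatrix_mul_apply]
    simp only [hJm, Matrix.of_apply, Matrix.smul_apply, smul_eq_mul, mul_one,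
      Finset.sum_const, nsmul_eq_mul]
    rw [show (G.neighborFinset i).card = G.degree i from rfl, hsrg.regular i, hkq]
  set p : ℚ[X] := (X - C kq) * (X * X - C cq * X - C dq) with hpdef
  have hpA : Polynomial.aeval A p = 0 := by
    have h1 : Polynomial.aeval A p =
        (A - kq • 1) * (A * A - cq • A - dq • 1) := by
      simp only [hpdef, _root_.map_mul, _root_.map_sub, aeval_X, aeval_C,
        Algebra.algebraMap_eq_smul_one, smul_mul_assoc, one_mul]
    rw [h1, hq, Matrix.sub_mul, hAJ, smul_mul_assoc, Matrix.one_mul, sub_self]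
  set f : ℚ[X] := A.charpoly with hf
  set L := f.SplittingField with hL
  set ψ : ℚ →+* L := algebraMap ℚ L with hψ
  have hψinj : Function.Injective ψ := ψ.injective
  set B : Matrix V V L := A.map ψ with hB
  have hcharB : B.charpoly = f.map ψ := Matrix.charpoly_map A ψ
  have hsplB : (B.charpoly).Splits := by
    rw [hcharB]
    exact Polynomial.SplittingField.splits f
  have htrB : B.trace = 0 := by
    have h0 : Matrix.trace A = 0 := by rw [hA]; exact SimpleGraph.trace_adjMatrix ℚ G
    have h1 : Matrix.trace B = ψ (Matrix.trace A) := by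
      simp only [Matrix.trace, Matrix.diag, hB, Matrix.map_apply]
      exact (map_sum ψ _ _).symm
    rw [h1, h0, _root_.map_zero]
  set R : Multiset L := B.charpoly.roots with hR
  have hsumR : R.sum = 0 := by
    rw [hR, ← Matrix.trace_eq_sum_roots_charpoly_of_splits hsplB, htrB]
  have hcardR : Multiset.card R = 2 ^ (2 * s + 1) - 1 := by
    have h1 := Polynomial.Splits.natDegree_eq_card_roots hsplB
    rw [hR, ← h1, Matrix.charpoly_natDegree_eq_dim, hVcard]
  set κ : L := ψ kq with hκ
  set cL : L := ψ cq with hcL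
  set dL : L := ψ dq with hdL
  have hrootsp : ∀ r ∈ R, (r - κ) * (r * r - cL * r - dL) = 0 := by
    intro r hr
    have hz : Polynomial.aeval B (p.map ψ) = 0 := by
      rw [hψ, Polynomial.aeval_map_algebraMap]
      have hBA : B = (AlgHom.mapMatrix (Algebra.ofId ℚ L)) A := by
        ext i j
        simp [hB, AlgHom.mapMatrix_apply, Matrix.map_apply, Algebra.ofId_apply, hψ]
      rw [hBA, Polynomial.aeval_algHom_apply, hpA, _root_.map_zero]
    have hev := eval_eq_zero_of_root_charpoly B (p.map ψ) hz r
      (Polynomial.isRoot_of_mem_roots hr)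
    simp only [hpdef, Polynomial.map_mul, Polynomial.map_sub, Polynomial.map_X,
      Polynomial.map_C, Polynomial.eval_mul, Polynomial.eval_sub, Polynomial.eval_X,
      Polynomial.eval_C, ← hκ, ← hcL, ← hdL] at hev
    exact hev
  set R1 : Multiset L := R.filter (fun r => r = κ) with hR1def
  set R2 : Multiset L := R.filter (fun r => ¬ r = κ) with hR2def
  have hsplit : R1 + R2 = R := Multiset.filter_add_not _ R
  set a : ℕ := Multiset.card R1 with hadef
  have hR1 : R1 = Multiset.replicate a κ :=
    Multiset.eq_replicate_card.mpr (fun b hb => (Multiset.mem_filter.mp hb).2)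
  have hq2 : ∀ r ∈ R2, r * r - cL * r - dL = 0 := by
    intro r hr
    have h1 := hrootsp r (Multiset.mem_of_mem_filter hr)
    have h2 : ¬ r = κ := (Multiset.mem_filter.mp hr).2
    rcases mul_eq_zero.mp h1 with h | h
    · exact absurd (sub_eq_zero.mp h) h2
    · exact h
  have hκne : κ ≠ 0 := by
    rw [hκ]
    intro h
    have h2 : kq = 0 := hψinj (by rw [_root_.map_zero]; exact h)
    rw [hkqdef] at h2
    linarith
  by_cases hR2 : R2 = 0
  · have hRrep : R = Multiset.replicate a κ := by rw [← hsplit, hR2, add_zero, hR1]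
    have hsum0 : (a : L) * κ = 0 := by
      rw [← nsmul_eq_mul, ← Multiset.sum_replicate, ← hRrep, hsumR]
    rcases mul_eq_zero.mp hsum0 with h | h
    · have ha0 : a = 0 := by exact_mod_cast h
      have hc : Multiset.card R = 0 := by rw [hRrep, ha0]; simp
      rw [hcardR] at hc
      omega
    · exact hκne h
  · obtain ⟨r₀, hr₀⟩ := Multiset.exists_mem_of_ne_zero hR2
    set ε : L := 2 * r₀ - cL with hε
    have hε2 : ε * ε = cL * cL + 4 * dL := by
      rw [hε]; linear_combination (4 : L) * hq2 r₀ hr₀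
    have h2L : (2 : L) ≠ 0 := by
      intro hzero
      have h2q : (2:ℚ) = 0 := hψinj (by rw [_root_.map_zero, _root_.map_ofNat]; exact hzero)
      norm_num at h2q
    have helem : ∀ r ∈ R2, r = (cL + ε) / 2 ∨ r = (cL - ε) / 2 := by
      intro r hr
      have h := hq2 r hr
      have hsq : (2 * r - cL) * (2 * r - cL) = ε * ε := by
        rw [hε2]; linear_combination (4 : L) * h
      rcases mul_self_eq_mul_self_iff.mp hsq with h' | h'
      · left; rw [eq_div_iff h2L]; linear_combination h'
      · right; rw [eq_div_iff h2L]; linear_combination h'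
    set S1 : Multiset L := R2.filter (fun r => r = (cL + ε) / 2) with hS1def
    set S2 : Multiset L := R2.filter (fun r => ¬ r = (cL + ε) / 2) with hS2def
    have hsplit2 : S1 + S2 = R2 := Multiset.filter_add_not _ R2
    set b₁ : ℕ := Multiset.card S1 with hb1def
    set b₂ : ℕ := Multiset.card S2 with hb2def
    have hS1 : S1 = Multiset.replicate b₁ ((cL + ε) / 2) :=
      Multiset.eq_replicate_card.mpr (fun b hb => (Multiset.mem_filter.mp hb).2)
    have hS2 : S2 = Multiset.replicate b₂ ((cL - ε) / 2) := by
      refine Multiset.eq_replicate_card.mpr (fun b hb => ?_)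
      have hm := Multiset.mem_filter.mp hb
      rcases helem b hm.1 with h | h
      · exact absurd h hm.2
      · exact h
    have hsum : (a : L) * κ + ((b₁ : L) * ((cL + ε) / 2) + (b₂ : L) * ((cL - ε) / 2)) = 0 := by
      have h1 : R1.sum + (S1.sum + S2.sum) = 0 := by
        rw [← Multiset.sum_add, hsplit2, ← Multiset.sum_add, hsplit, hsumR]
      rw [hR1, hS1, hS2] at h1
      simpa only [Multiset.sum_replicate, nsmul_eq_mul] using h1
    have hcards : a + (b₁ + b₂) = 2 ^ (2 * s + 1) - 1 := by
      have h1 : Multiset.card R = a + (b₁ + b₂) := by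
        rw [← hsplit, Multiset.card_add, ← hsplit2, Multiset.card_add]
      rw [← hcardR, h1]
    by_cases hb : b₁ = b₂
    · have hcast : ((b₂ : ℕ) : L) = (b₁ : L) := by rw [hb]
      have hL0 : ψ ((a : ℚ) * kq + (b₁ : ℚ) * cq) = 0 := by
        simp only [_root_.map_add, _root_.map_mul, map_natCast, ← hκ, ← hcL]
        linear_combination hsum - ((cL - ε) / 2) * hcast
      have hQ : (a : ℚ) * kq + (b₁ : ℚ) * cq = 0 :=
        hψinj (by rw [_root_.map_zero]; exact hL0)
      have ha0 : a = 0 := by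
        have h1 : (0:ℚ) ≤ (a : ℚ) := Nat.cast_nonneg a
        have h2 : (0:ℚ) ≤ (b₁ : ℚ) := Nat.cast_nonneg b₁
        rw [hkqdef, hcqdef] at hQ
        have h3 : (a : ℚ) = 0 := by nlinarith
        exact_mod_cast h3
      have hpow : 2 ^ (2 * s + 1) = 2 * 2 ^ (2 * s) := by rw [pow_succ]; ring
      have hpos : 1 ≤ 2 ^ (2 * s) := Nat.one_le_two_pow
      omega
    · have hmq : ((b₁ : ℚ) - (b₂ : ℚ)) ≠ 0 := sub_ne_zero.mpr (by exact_mod_cast hb)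
      have hεeqL : ((b₁ : L) - (b₂ : L)) * ε = -(2 * (a : L) * κ + ((b₁ : L) + (b₂ : L)) * cL) := by
        linear_combination (2 : L) * hsum
      have hQ2 : (2 * (a : ℚ) * kq + ((b₁ : ℚ) + (b₂ : ℚ)) * cq) ^ 2
          = ((b₁ : ℚ) - (b₂ : ℚ)) ^ 2 * (cq * cq + 4 * dq) := by
        apply hψinj
        simp only [_root_.map_pow, _root_.map_mul, _root_.map_add, _root_.map_sub,
          map_natCast, _root_.map_ofNat, ← hκ, ← hcL, ← hdL]
        have hP : 2 * (a : L) * κ + ((b₁ : L) + (b₂ : L)) * cL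
            = -(((b₁ : L) - (b₂ : L)) * ε) := by linear_combination hεeqL
        rw [hP]
        calc (-(((b₁ : L) - (b₂ : L)) * ε)) ^ 2
            = ((b₁ : L) - (b₂ : L)) ^ 2 * (ε * ε) := by ring
          _ = ((b₁ : L) - (b₂ : L)) ^ 2 * (cL * cL + 4 * dL) := by rw [hε2]
      set x : ℚ := (2 * (a : ℚ) * kq + ((b₁ : ℚ) + (b₂ : ℚ)) * cq) / ((b₁ : ℚ) - (b₂ : ℚ))
        with hx
      have hxx : x ^ 2 = (4:ℚ) ^ s + 4 := by
        rw [hx, div_pow, hQ2, mul_div_cancel_left₀ _ (pow_ne_zero 2 hmq)]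
        rw [hcqdef, hdqdef]
        have hu2 : u * u = (4:ℚ) ^ s := by
          rw [hu, show (4:ℚ) = 2 ^ 2 by norm_num, ← pow_add, ← pow_mul, two_mul]
        linear_combination hu2
      exact norat4 (by omega) x hxx
end

section
/- Let G be a finite non-abelian group and let m, n be positive integers. Then T(G) is isomorphic to a disjoint union of m copies of the complete graph K_n if and only if mn = [G : Z(G)] − 1 and for every non-central x ∈ G, the centralizer C_G(x) is abelian and [C_G(x) : Z(G)] = n + 1. -/
open scoped commutatorElement

open Pointwise Subgroup

section AuxStmt15

variable {G : Type*} [Group G]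
lemma IsCenterTransversal.eq {T : Set G} (hT : IsCenterTransversal G T)
    {t t' : G} (ht : t ∈ T) (ht' : t' ∈ T) (h : t⁻¹ * t' ∈ Subgroup.center G) : t' = t := by
  obtain ⟨u, -, hu⟩ := hT t
  rw [hu t' ⟨ht', h⟩, hu t ⟨ht, by rw [inv_mul_cancel]; exact Subgroup.one_mem _⟩]

lemma left_mem_center {x t : G} (h : x⁻¹ * t ∈ center G) (ht : t ∈ center G) :
    x ∈ center G := by
  have hx : x = t * (x⁻¹ * t)⁻¹ := by group
  rw [hx]; exact mul_mem ht (inv_mem h)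

lemma comm_iff_of_center {a t : G} (hz : a⁻¹ * t ∈ Subgroup.center G) (x : G) :
    x * t = t * x ↔ x * a = a * x := by
  obtain ⟨z, hzc, rfl⟩ : ∃ z ∈ Subgroup.center G, t = a * z := ⟨a⁻¹ * t, hz, by group⟩
  have h := Subgroup.mem_center_iff.mp hzc
  constructor <;> intro hh
  · have h2 : x * a * z = a * x * z := by
      calc x * a * z = x * (a * z) := mul_assoc x a z
        _ = (a * z) * x := hh
        _ = a * (z * x) := mul_assoc a z x
        _ = a * (x * z) := by rw [h x]
        _ = a * x * z := (mul_assoc a x z).symm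
    exact mul_right_cancel h2
  · calc x * (a * z) = x * a * z := (mul_assoc x a z).symm
      _ = a * x * z := by rw [hh]
      _ = a * (x * z) := mul_assoc a x z
      _ = a * (z * x) := by rw [h x]
      _ = (a * z) * x := (mul_assoc a z x).symm

lemma comm_iff_comm {a b ta tb : G} (ha : a⁻¹ * ta ∈ center G)
    (hb : b⁻¹ * tb ∈ center G) : ta * tb = tb * ta ↔ a * b = b * a :=
  (comm_iff_of_center hb ta).trans (eq_comm.trans ((comm_iff_of_center ha b).trans eq_comm))

lemma card_ne_one {Q : Type*} [One Q] [Finite Q] :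
    Nat.card {c : Q // c ≠ 1} = Nat.card Q - 1 := by
  classical
  haveI : Fintype Q := Fintype.ofFinite Q
  rw [Nat.card_eq_fintype_card, Nat.card_eq_fintype_card]
  simp [Fintype.card_subtype_compl, Fintype.card_subtype_eq]

lemma vertexInEquiv [Finite G] {T : Set G} (hT : IsCenterTransversal G T)
    (K : Subgroup G) (hK : Subgroup.center G ≤ K) :
    Nat.card {v : ↥(T \ ((Subgroup.center G : Subgroup G) : Set G)) // (v : G) ∈ K}
      = (Subgroup.center G).relIndex K - 1 := by
  classical
  let f : {v : ↥(T \ ((Subgroup.center G : Subgroup G) : Set G)) // (v : G) ∈ K} →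
      {c : K ⧸ (Subgroup.center G).subgroupOf K // c ≠ 1} :=
    fun v => ⟨QuotientGroup.mk ⟨(v : G), v.2⟩, by
      intro h
      rw [QuotientGroup.eq_one_iff, Subgroup.mem_subgroupOf] at h
      exact v.1.2.2 h⟩
  have hbij : Function.Bijective f := by
    constructor
    · intro v w h
      have h2 : (⟨(v : G), v.2⟩ : K)⁻¹ * ⟨(w : G), w.2⟩ ∈ (Subgroup.center G).subgroupOf K :=
        QuotientGroup.eq.mp (congrArg Subtype.val h)
      rw [Subgroup.mem_subgroupOf] at h2
      have := hT.eq v.1.2.1 w.1.2.1 h2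
      exact Subtype.ext (Subtype.ext this.symm)
    · rintro ⟨c, hc⟩
      obtain ⟨g, rfl⟩ := QuotientGroup.mk_surjective c
      obtain ⟨t, ⟨htT, htZ⟩, -⟩ := hT (g : G)
      have htK : t ∈ K := by
        have : (g : G) * ((g : G)⁻¹ * t) ∈ K := K.mul_mem g.2 (hK htZ)
        rwa [mul_inv_cancel_left] at this
      have htnZ : t ∉ Subgroup.center G := by
        intro htc
        apply hc
        rw [QuotientGroup.eq_one_iff, Subgroup.mem_subgroupOf]
        exact left_mem_center htZ htc
      refine ⟨⟨⟨t, ⟨htT, htnZ⟩⟩, htK⟩, ?_⟩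
      apply Subtype.ext
      show QuotientGroup.mk _ = QuotientGroup.mk g
      rw [QuotientGroup.eq, Subgroup.mem_subgroupOf]
      show t⁻¹ * (g : G) ∈ Subgroup.center G
      have := inv_mem htZ
      rwa [mul_inv_rev, inv_inv] at this
  rw [Nat.card_congr (Equiv.ofBijective f hbij), card_ne_one]
  rfl

lemma card_vertices [Finite G] {T : Set G} (hT : IsCenterTransversal G T) :
    Nat.card ↥(T \ ((Subgroup.center G : Subgroup G) : Set G))
      = (Subgroup.center G).index - 1 := by
  have h := vertexInEquiv hT ⊤ le_top
  rw [Subgroup.relIndex_top_right] at h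
  rw [← h]
  exact Nat.card_congr (Equiv.subtypeUnivEquiv fun v => Subgroup.mem_top _).symm
lemma exists_equiv_of_partition {V : Type*} [Finite V] (s : Setoid V) {m n : ℕ}
    (hn : 0 < n) (hclass : ∀ v : V, Nat.card {w : V // s.r w v} = n)
    (hcard : Nat.card V = m * n) :
    ∃ e : V ≃ Fin m × Fin n, ∀ v w : V, ((e v).1 = (e w).1 ↔ s.r v w) := by
  classical
  haveI : Fintype V := Fintype.ofFinite V
  let g : V → Quotient s := Quotient.mk s
  have hfiber : ∀ q : Quotient s, Nat.card {v : V // g v = q} = n := by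
    intro q
    obtain ⟨v, rfl⟩ := Quotient.exists_rep q
    rw [← hclass v]
    refine Nat.card_congr (Equiv.subtypeEquivRight fun w => ?_)
    show g w = g v ↔ _
    exact ⟨fun h => Quotient.exact h, fun h => Quotient.sound h⟩
  have fibEquiv : ∀ q : Quotient s, {v : V // g v = q} ≃ Fin n := fun q =>
    Fintype.equivFinOfCardEq (by rw [← Nat.card_eq_fintype_card]; exact hfiber q)
  let e1 : V ≃ Σ q : Quotient s, {v : V // g v = q} := (Equiv.sigmaFiberEquiv g).symm
  let e2 : (Σ q : Quotient s, {v : V // g v = q}) ≃ (Quotient s) × Fin n :=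
    (Equiv.sigmaCongrRight fibEquiv).trans (Equiv.sigmaEquivProd _ _)
  have hQ : Fintype.card (Quotient s) = m := by
    have h := Nat.card_congr (e1.trans e2)
    rw [hcard, Nat.card_eq_fintype_card, Fintype.card_prod, Fintype.card_fin] at h
    exact (Nat.eq_of_mul_eq_mul_right hn h.symm)
  let eQ : Quotient s ≃ Fin m := Fintype.equivFinOfCardEq hQ
  let e : V ≃ Fin m × Fin n := e1.trans (e2.trans (Equiv.prodCongr eQ (Equiv.refl (Fin n))))
  have he : ∀ v : V, (e v).1 = eQ (g v) := fun v => rfl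
  refine ⟨e, fun v w => ?_⟩
  rw [he v, he w]
  constructor
  · intro h
    exact Quotient.exact (eQ.injective h)
  · intro h
    exact congrArg eQ (Quotient.sound h)

end AuxStmt15

theorem stmt15 (G : Type*) [Group G] [Finite G] (hna : ∃ a b : G, a * b ≠ b * a)
    (m n : ℕ) (hm : 0 < m) (hn : 0 < n) (T : Set G) (hT : IsCenterTransversal G T) :
    Nonempty (TGraph G T ≃g mKn m n) ↔
      (m * n = (Subgroup.center G).index - 1 ∧
        ∀ x : G, x ∉ Subgroup.center G →
          IsMulCommutative (Subgroup.centralizer {x}) ∧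
            (Subgroup.center G).relIndex (Subgroup.centralizer {x}) = n + 1) := by
  classical
  constructor
  · rintro ⟨f⟩
    have hcardV := card_vertices hT
    have hcard2 : Nat.card ↥(T \ ((Subgroup.center G : Subgroup G) : Set G)) = m * n := by
      rw [Nat.card_congr f.toEquiv, Nat.card_prod]
      simp
    refine ⟨hcard2.symm.trans hcardV, fun x hx => ?_⟩
    obtain ⟨tx, ⟨htxT, htxZ⟩, -⟩ := hT x
    have htxnZ : tx ∉ Subgroup.center G := fun h => hx (left_mem_center htxZ h)
    set vx : ↥(T \ ((Subgroup.center G : Subgroup G) : Set G)) := ⟨tx, ⟨htxT, htxnZ⟩⟩ with hvx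
    -- key: any two elements of the centralizer commute
    have key : ∀ a b : G, a ∈ centralizer {x} → b ∈ centralizer {x} → a * b = b * a := by
      intro a b ha hb
      rw [mem_centralizer_singleton_iff] at ha hb
      by_cases haZ : a ∈ Subgroup.center G
      · exact (Subgroup.mem_center_iff.mp haZ b).symm
      by_cases hbZ : b ∈ Subgroup.center G
      · exact Subgroup.mem_center_iff.mp hbZ a
      obtain ⟨ta, ⟨htaT, htaZ⟩, -⟩ := hT a
      obtain ⟨tb, ⟨htbT, htbZ⟩, -⟩ := hT b
      have htanZ : ta ∉ Subgroup.center G := fun h => haZ (left_mem_center htaZ h)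
      have htbnZ : tb ∉ Subgroup.center G := fun h => hbZ (left_mem_center htbZ h)
      rw [← comm_iff_comm htaZ htbZ]
      -- ta commutes with tx
      have hax : ta * tx = tx * ta := by
        rw [comm_iff_of_center htxZ ta, eq_comm, comm_iff_of_center htaZ x, eq_comm]
        exact ha
      have hbx : tb * tx = tx * tb := by
        rw [comm_iff_of_center htxZ tb, eq_comm, comm_iff_of_center htbZ x, eq_comm]
        exact hb
      by_cases h1 : ta = tb
      · rw [h1]
      by_cases h2 : ta = tx
      · rw [h2, ← hbx]
      by_cases h3 : tb = tx
      · rw [h3]; exact hax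
      set va : ↥(T \ ((Subgroup.center G : Subgroup G) : Set G)) := ⟨ta, ⟨htaT, htanZ⟩⟩
      set vb : ↥(T \ ((Subgroup.center G : Subgroup G) : Set G)) := ⟨tb, ⟨htbT, htbnZ⟩⟩
      have adj1 : (TGraph G T).Adj va vx :=
        And.intro (fun h => h2 (congrArg Subtype.val h)) hax
      have adj2 : (TGraph G T).Adj vb vx :=
        And.intro (fun h => h3 (congrArg Subtype.val h)) hbx
      have m1 := And.right (f.map_rel_iff.mpr adj1)
      have m2 := And.right (f.map_rel_iff.mpr adj2)
      have hne : f va ≠ f vb := fun h =>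
        h1 (congrArg Subtype.val (f.toEquiv.injective h))
      exact And.right (f.map_rel_iff.mp (And.intro hne (m1.trans m2.symm)))
    refine ⟨⟨⟨fun a b => Subtype.ext (key a b a.2 b.2)⟩⟩, ?_⟩
    -- relindex computation
    have hvxmem : (tx : G) ∈ centralizer {x} := by
      rw [mem_centralizer_singleton_iff, eq_comm]
      exact (comm_iff_of_center htxZ x).mpr rfl
    have hmem_iff : ∀ v : ↥(T \ ((Subgroup.center G : Subgroup G) : Set G)),
        ((v : G) ∈ centralizer {x}) ↔ (f v).1 = (f vx).1 := by
      intro v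
      rw [mem_centralizer_singleton_iff]
      constructor
      · intro hv
        by_cases hvv : v = vx
        · rw [hvv]
        have adj : (TGraph G T).Adj v vx := by
          refine And.intro hvv ?_
          exact (comm_iff_of_center htxZ (v : G)).mpr hv
        exact And.right (f.map_rel_iff.mpr adj)
      · intro hv
        by_cases hvv : v = vx
        · rw [hvv]; exact mem_centralizer_singleton_iff.mp hvxmem
        have hfne : f v ≠ f vx := fun h => hvv (f.toEquiv.injective h)
        have adj := f.map_rel_iff.mp (And.intro hfne hv)
        exact (comm_iff_of_center htxZ (v : G)).mp (And.right adj)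
    have hcount : Nat.card {v : ↥(T \ ((Subgroup.center G : Subgroup G) : Set G)) //
        (v : G) ∈ centralizer {x}} = n := by
      let e2 : {p : Fin m × Fin n // p.1 = (f vx).1} ≃ Fin n :=
        { toFun := fun p => p.1.2
          invFun := fun j => ⟨((f vx).1, j), rfl⟩
          left_inv := fun p => Subtype.ext (Prod.ext p.2.symm rfl)
          right_inv := fun j => rfl }
      rw [Nat.card_congr ((Equiv.subtypeEquiv f.toEquiv hmem_iff).trans e2)]
      simp
    have hle : Subgroup.center G ≤ centralizer {x} := center_le_centralizer {x}
    have hrel := vertexInEquiv hT (centralizer {x}) hle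
    rw [hcount] at hrel
    have hpos : 0 < (Subgroup.center G).relIndex (centralizer {x}) := by
      show 0 < Nat.card ((centralizer {x} : Subgroup G) ⧸
        (Subgroup.center G).subgroupOf (centralizer {x}))
      exact Nat.card_pos
    omega
  · rintro ⟨hmn, hcent⟩
    let s : Setoid ↥(T \ ((Subgroup.center G : Subgroup G) : Set G)) :=
      { r := fun v w => (v : G) * w = w * v
        iseqv := by
          refine ⟨fun v => rfl, fun h => h.symm, ?_⟩
          intro v w u h1 h2
          haveI := (hcent (w : G) w.2.2).1
          exact mul_comm_of_mem_isMulCommutative (centralizer {(w : G)})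
            (mem_centralizer_singleton_iff.mpr h1)
            (mem_centralizer_singleton_iff.mpr h2.symm) }
    have hclass : ∀ v : ↥(T \ ((Subgroup.center G : Subgroup G) : Set G)),
        Nat.card {w // s.r w v} = n := by
      intro v
      have hle : Subgroup.center G ≤ centralizer {(v : G)} := center_le_centralizer _
      have h := vertexInEquiv hT (centralizer {(v : G)}) hle
      rw [(hcent (v : G) v.2.2).2] at h
      have heq : Nat.card {w // s.r w v}
          = Nat.card {w : ↥(T \ ((Subgroup.center G : Subgroup G) : Set G)) //
              (w : G) ∈ centralizer {(v : G)}} :=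
        Nat.card_congr (Equiv.subtypeEquivRight fun w => by
          show (w : G) * v = v * w ↔ _
          rw [mem_centralizer_singleton_iff])
      rw [heq, h]
      omega
    have hcard : Nat.card ↥(T \ ((Subgroup.center G : Subgroup G) : Set G)) = m * n := by
      rw [card_vertices hT, ← hmn]
    obtain ⟨e, he⟩ := exists_equiv_of_partition s hn hclass hcard
    refine ⟨⟨e, ?_⟩⟩
    intro a b
    simp only [TGraph, commGraph, mKn]
    show (e a ≠ e b ∧ (e a).1 = (e b).1) ↔ (a ≠ b ∧ (a : G) * b = b * a)
    rw [he a b]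
    constructor
    · rintro ⟨h1, h2⟩
      exact ⟨fun hh => h1 (congrArg e hh), h2⟩
    · rintro ⟨h1, h2⟩
      exact ⟨fun hh => h1 (e.injective hh), h2⟩
end

section
/- Let G be a finite non-abelian group. The commuting graph Γ(G) (on vertex set G \ Z(G)) is strongly regular if and only if Γ(G) ≅ mK_s where ms = |G \ Z(G)| and s = ([C_G(x) : Z(G)] − 1)·|Z(G)| for all non-central x ∈ G. -/
open scoped commutatorElement

open Pointwise Subgroup

-- L1: special edge
lemma aux_special_edge {G : Type*} [Group G] (hna : ∃ a b : G, a * b ≠ b * a) :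
    ∃ x y : G, x ∉ Subgroup.center G ∧ y ∉ Subgroup.center G ∧ x ≠ y ∧ x * y = y * x ∧
      (∀ g : G, x * g = g * x → y * g = g * y) := by
  obtain ⟨a, b, hab⟩ := hna
  have ha : a ∉ Subgroup.center G := fun h => hab ((Subgroup.mem_center_iff.1 h b).symm)
  by_cases hZ : ∃ z ∈ Subgroup.center G, z ≠ 1
  · obtain ⟨z, hz, hz1⟩ := hZ
    refine ⟨a, a * z, ha, ?_, ?_, ?_, ?_⟩
    · intro h
      apply ha
      have : a * z * z⁻¹ ∈ Subgroup.center G := mul_mem h (inv_mem hz)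
      simpa using this
    · intro h; exact hz1 (by simpa using h)
    · have hza := Subgroup.mem_center_iff.1 hz a
      calc a * (a * z) = a * (z * a) := by rw [hza]
        _ = (a * z) * a := by rw [mul_assoc]
    · intro g hg
      have hzg := Subgroup.mem_center_iff.1 hz g
      calc a * z * g = a * (z * g) := by rw [mul_assoc]
        _ = a * (g * z) := by rw [← hzg]
        _ = (a * g) * z := by rw [mul_assoc]
        _ = (g * a) * z := by rw [← hg]
        _ = g * (a * z) := by rw [mul_assoc]
  · push_neg at hZ
    by_cases h2 : ∃ x : G, x ∉ Subgroup.center G ∧ x * x ∉ Subgroup.center G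
    · obtain ⟨x, hx, hx2⟩ := h2
      refine ⟨x, x * x, hx, hx2, ?_, by group, ?_⟩
      · intro h
        have : x = 1 := by
          have := mul_right_cancel (a := x) (b := x) (c := 1) (by simpa using h.symm)
          simpa using this
        exact hx (this ▸ one_mem _)
      · intro g hg
        calc x * x * g = x * (x * g) := by rw [mul_assoc]
          _ = x * (g * x) := by rw [← hg]
          _ = (x * g) * x := by rw [mul_assoc]
          _ = (g * x) * x := by rw [hg]
          _ = g * (x * x) := by rw [mul_assoc]
    · push_neg at h2
      exfalso
      have hsq : ∀ x : G, x * x = 1 := by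
        intro x
        by_cases hx : x ∈ Subgroup.center G
        · exact hZ _ (mul_mem hx hx)
        · exact hZ _ (h2 x hx)
      apply hab
      have h1 : (a * b) * (a * b) = 1 := hsq _
      have : a * (b * a) * b = 1 := by
        calc a * (b * a) * b = (a * b) * (a * b) := by group
          _ = 1 := h1
      calc a * b = a * (a * (b * a) * b) * b := by rw [this]; group
        _ = (a * a) * (b * a) * (b * b) := by group
        _ = 1 * (b * a) * 1 := by rw [hsq a, hsq b]
        _ = b * a := by group

-- L2a: relIndex card
lemma aux_relIndex_card {G : Type*} [Group G] [Finite G] {H K : Subgroup G} (h : H ≤ K) :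
    Nat.card K = H.relIndex K * Nat.card H := by
  have h1 : Nat.card (H.subgroupOf K) * (H.subgroupOf K).index = Nat.card K :=
    Subgroup.card_mul_index _
  have h2 : Nat.card (H.subgroupOf K) = Nat.card H :=
    Nat.card_congr (Subgroup.subgroupOfEquivOfLe h).toEquiv
  rw [Subgroup.relIndex, mul_comm, ← h2, h1]

-- L2c : strict card
lemma aux_card_lt {G : Type*} [Group G] [Finite G] {x : G} (hx : x ∉ Subgroup.center G) :
    Nat.card (Subgroup.center G) < Nat.card (Subgroup.centralizer {x}) := by
  have e1 : Nat.card (Subgroup.center G) = (Subgroup.center G : Set G).ncard :=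
    Nat.card_coe_set_eq _
  have e2 : Nat.card (Subgroup.centralizer {x}) = (Subgroup.centralizer {x} : Set G).ncard :=
    Nat.card_coe_set_eq _
  rw [e1, e2]
  apply Set.ncard_lt_ncard _ (Set.toFinite _)
  constructor
  · exact Subgroup.center_le_centralizer _
  · intro h
    exact hx (h (Subgroup.mem_centralizer_singleton_iff.2 rfl))

-- L3 : neighbor set cardinality
lemma aux_neighbor_card {G : Type*} [Group G] [Finite G]
    (x : ↥((Subgroup.center G : Set G))ᶜ) :
    ((commGraph G ((Subgroup.center G : Set G))ᶜ).neighborSet x).ncard =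
      Nat.card (Subgroup.centralizer {(x : G)}) - Nat.card (Subgroup.center G) - 1 := by
  set Γ := commGraph G ((Subgroup.center G : Set G))ᶜ
  have himg : Subtype.val '' (Γ.neighborSet x) =
      (Subgroup.centralizer {(x : G)} : Set G) \ ((Subgroup.center G : Set G) ∪ {(x : G)}) := by
    ext g
    simp only [Set.mem_image, Set.mem_diff, Set.mem_union, Set.mem_singleton_iff,
      SetLike.mem_coe, Subgroup.mem_centralizer_singleton_iff]
    constructor
    · rintro ⟨y, hy, rfl⟩
      obtain ⟨hne, hcomm⟩ := hy
      refine ⟨hcomm.symm, ?_⟩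
      intro hor
      rcases hor with hc | he
      · exact y.2 hc
      · exact hne (Subtype.ext he.symm)
    · rintro ⟨hcomm, hor⟩
      push_neg at hor
      exact ⟨⟨g, hor.1⟩, ⟨fun h => hor.2 (congrArg Subtype.val h).symm, hcomm.symm⟩, rfl⟩
  have h1 : (Γ.neighborSet x).ncard = (Subtype.val '' (Γ.neighborSet x)).ncard :=
    (Set.ncard_image_of_injective _ Subtype.val_injective).symm
  rw [h1, himg]
  have hsub : (Subgroup.center G : Set G) ∪ {(x : G)} ⊆ (Subgroup.centralizer {(x : G)} : Set G) := by
    rintro g (hg | hg)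
    · exact Subgroup.center_le_centralizer _ hg
    · rw [Set.mem_singleton_iff] at hg
      subst hg
      exact Subgroup.mem_centralizer_singleton_iff.2 rfl
  rw [Set.ncard_diff hsub (Set.toFinite _)]
  have hdisj : Disjoint (Subgroup.center G : Set G) ({(x : G)} : Set G) := by
    rw [Set.disjoint_singleton_right]
    exact x.2
  rw [Set.ncard_union_eq hdisj (Set.toFinite _) (Set.toFinite _), Set.ncard_singleton]
  have e1 : Nat.card (Subgroup.center G) = (Subgroup.center G : Set G).ncard :=
    Nat.card_coe_set_eq _
  have e2 : Nat.card (Subgroup.centralizer {(x : G)}) =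
      (Subgroup.centralizer {(x : G)} : Set G).ncard := Nat.card_coe_set_eq _
  rw [e1, e2]
  omega

lemma aux_clique_union_iso {V : Type*} [Finite V] (Γ : SimpleGraph V) (k : ℕ)
    (hreg : ∀ x, (Γ.neighborSet x).ncard = k)
    (htrans : ∀ a b c, Γ.Adj a b → Γ.Adj a c → b ≠ c → Γ.Adj b c) :
    ∃ m, Nonempty (Γ ≃g mKn m (k + 1)) ∧ m * (k + 1) = Nat.card V := by
  classical
  -- the equivalence relation
  let st : Setoid V :=
    ⟨fun x y => x = y ∨ Γ.Adj x y, by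
      refine ⟨fun x => Or.inl rfl, ?_, ?_⟩
      · rintro x y (rfl | h)
        · exact Or.inl rfl
        · exact Or.inr h.symm
      · rintro x y z (rfl | hxy) h
        · exact h
        · rcases h with rfl | hyz
          · exact Or.inr hxy
          · by_cases hxz : x = z
            · exact Or.inl hxz
            · exact Or.inr (htrans y x z hxy.symm hyz hxz)⟩
  letI := Fintype.ofFinite V
  letI : Fintype (Quotient st) := Fintype.ofFinite _
  have hfiber : ∀ q : Quotient st, Fintype.card {x : V // Quotient.mk st x = q} = k + 1 := by
    intro q
    induction q using Quotient.ind with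
    | _ x₀ =>
      have hset : {x : V | Quotient.mk st x = Quotient.mk st x₀} =
          insert x₀ (Γ.neighborSet x₀) := by
        ext y
        simp only [Set.mem_setOf_eq, Quotient.eq, Set.mem_insert_iff,
          SimpleGraph.mem_neighborSet]
        constructor
        · rintro (rfl | h)
          · exact Or.inl rfl
          · exact Or.inr h.symm
        · rintro (rfl | h)
          · exact Or.inl rfl
          · exact Or.inr h.symm
      have h1 : Fintype.card {x : V // Quotient.mk st x = Quotient.mk st x₀} =
          {x : V | Quotient.mk st x = Quotient.mk st x₀}.ncard := by
        rw [← Nat.card_coe_set_eq, Nat.card_eq_fintype_card]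
        rfl
      have h2 : (insert x₀ (Γ.neighborSet x₀)).ncard = (Γ.neighborSet x₀).ncard + 1 :=
        Set.ncard_insert_of_notMem (fun h => Γ.irrefl h) (Set.toFinite _)
      rw [h1, hset, h2, hreg x₀]
  let F : ∀ q : Quotient st, {x : V // Quotient.mk st x = q} ≃ Fin (k + 1) :=
    fun q => Fintype.equivFinOfCardEq (hfiber q)
  let eQ := Fintype.equivFin (Quotient st)
  let e : V ≃ Fin (Fintype.card (Quotient st)) × Fin (k + 1) :=
    (Equiv.sigmaFiberEquiv (Quotient.mk st)).symm.trans
      ((Equiv.sigmaCongrRight F).trans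
        ((Equiv.sigmaEquivProd (Quotient st) (Fin (k + 1))).trans
          (Equiv.prodCongr eQ (Equiv.refl _))))
  have hfst : ∀ x : V, (e x).1 = eQ (Quotient.mk st x) := fun x => rfl
  refine ⟨Fintype.card (Quotient st), ⟨⟨e, ?_⟩⟩, ?_⟩
  · intro a b
    show ((e a ≠ e b) ∧ (e a).1 = (e b).1) ↔ Γ.Adj a b
    rw [hfst, hfst]
    constructor
    · rintro ⟨hne, hq⟩
      have hq' : Quotient.mk st a = Quotient.mk st b := eQ.injective hq
      have hab : a ≠ b := fun h => hne (by rw [h])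
      rcases Quotient.eq.1 hq' with rfl | h
      · exact absurd rfl hab
      · exact h
    · intro h
      refine ⟨fun hc => Γ.ne_of_adj h (e.injective hc), ?_⟩
      congr 1
      exact Quotient.sound (Or.inr h)
  · rw [← Nat.card_eq_fintype_card (α := Quotient st)]
    have := Nat.card_congr e
    simp only [Nat.card_eq_fintype_card, Fintype.card_prod, Fintype.card_fin] at this ⊢
    omega

theorem stmt17 (G : Type*) [Group G] [Finite G] (hna : ∃ a b : G, a * b ≠ b * a) :
    (∃ v k l m, IsSRG (commGraph G ((Subgroup.center G : Set G))ᶜ) v k l m) ↔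
      ∃ m s : ℕ,
        Nonempty (commGraph G ((Subgroup.center G : Set G))ᶜ ≃g mKn m s) ∧
        m * s = Nat.card ↥(((Subgroup.center G : Set G))ᶜ) ∧
        ∀ x : G, x ∉ Subgroup.center G →
          s = ((Subgroup.center G).relIndex (Subgroup.centralizer {x}) - 1)
                * Nat.card (Subgroup.center G) := by
  classical
  set Γ := commGraph G ((Subgroup.center G : Set G))ᶜ with hΓ
  obtain ⟨x, y, hx, hy, hxy, hcomm, hcent⟩ := aux_special_edge hna
  have hx' : x ∈ ((Subgroup.center G : Set G))ᶜ := hx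
  have hy' : y ∈ ((Subgroup.center G : Set G))ᶜ := hy
  set X : ↥((Subgroup.center G : Set G))ᶜ := ⟨x, hx'⟩
  set Y : ↥((Subgroup.center G : Set G))ᶜ := ⟨y, hy'⟩
  have hadjXY : Γ.Adj X Y := ⟨fun h => hxy (congrArg Subtype.val h), hcomm⟩
  constructor
  · rintro ⟨v, k, l, μ, hv, hk, hkv, hreg, hlam, hmu⟩
    -- the special edge shows l = k - 1
    have heq : Γ.neighborSet X ∩ Γ.neighborSet Y = Γ.neighborSet X \ {Y} := by
      ext a
      simp only [Set.mem_inter_iff, Set.mem_diff, Set.mem_singleton_iff,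
        SimpleGraph.mem_neighborSet]
      constructor
      · rintro ⟨h1, h2⟩
        exact ⟨h1, fun h => Γ.irrefl (h ▸ h2)⟩
      · rintro ⟨h1, h2⟩
        refine ⟨h1, ?_, ?_⟩
        · exact fun h => h2 h.symm
        · exact hcent _ h1.2
    have hYX : Y ∈ Γ.neighborSet X := hadjXY
    have hl : l = k - 1 := by
      have h1 := hlam X Y hadjXY
      rw [heq] at h1
      have h2 : (Γ.neighborSet X \ {Y}).ncard = (Γ.neighborSet X).ncard - 1 :=
        Set.ncard_diff_singleton_of_mem hYX
      rw [h2, hreg X] at h1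
      omega
    -- transitivity
    have htrans : ∀ a b c, Γ.Adj a b → Γ.Adj a c → b ≠ c → Γ.Adj b c := by
      intro a b c hab hac hbc
      have key : Γ.neighborSet a ∩ Γ.neighborSet b = Γ.neighborSet a \ {b} := by
        apply Set.eq_of_subset_of_ncard_le
        · rintro z ⟨h1, h2⟩
          exact ⟨h1, fun h => Γ.irrefl (h ▸ h2)⟩
        · have h1 : (Γ.neighborSet a \ {b}).ncard = (Γ.neighborSet a).ncard - 1 :=
            Set.ncard_diff_singleton_of_mem hab
          rw [h1, hreg a, hlam a b hab, hl]
        · exact Set.toFinite _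
      have hc : c ∈ Γ.neighborSet a \ {b} := ⟨hac, fun h => hbc (by simpa using h.symm)⟩
      rw [← key] at hc
      exact hc.2
    obtain ⟨m, ⟨iso⟩, hcard⟩ := aux_clique_union_iso Γ k hreg htrans
    refine ⟨m, k + 1, ⟨iso⟩, hcard, ?_⟩
    intro z hz
    have hz' : z ∈ ((Subgroup.center G : Set G))ᶜ := hz
    have hk1 := hreg ⟨z, hz'⟩
    have hn := aux_neighbor_card (G := G) ⟨z, hz'⟩
    rw [show ((⟨z, hz'⟩ : ↥((Subgroup.center G : Set G))ᶜ) : G) = z from rfl] at hn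
    have hlt := aux_card_lt hz
    have hr := aux_relIndex_card (Subgroup.center_le_centralizer ({z} : Set G))
    have hposZ : 0 < Nat.card (Subgroup.center G) := Nat.card_pos
    have hsm : ((Subgroup.center G).relIndex (Subgroup.centralizer {z}) - 1)
        * Nat.card (Subgroup.center G)
        = (Subgroup.center G).relIndex (Subgroup.centralizer {z})
            * Nat.card (Subgroup.center G) - 1 * Nat.card (Subgroup.center G) :=
      Nat.sub_mul _ _ _
    rw [hsm, one_mul, ← hr]
    rw [hk1] at hn
    omega
  · rintro ⟨m, s, ⟨f⟩, hms, hform⟩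
    -- s ≥ 2
    have hmknadj : (mKn m s).Adj (f X) (f Y) := f.map_adj_iff.2 hadjXY
    have hs2 : 2 ≤ s := by
      obtain ⟨hne, hfst⟩ := hmknadj
      have hsnd : (f X).2 ≠ (f Y).2 := fun h => hne (Prod.ext hfst h)
      have hv1 : ((f X).2 : ℕ) ≠ ((f Y).2 : ℕ) := fun h => hsnd (Fin.ext h)
      have := (f X).2.isLt
      have := (f Y).2.isLt
      omega
    -- m ≥ 2
    obtain ⟨a, b, hab⟩ := hna
    have ha : a ∉ Subgroup.center G := fun h => hab ((Subgroup.mem_center_iff.1 h b).symm)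
    have hb : b ∉ Subgroup.center G := fun h => hab (Subgroup.mem_center_iff.1 h a)
    have ha' : a ∈ ((Subgroup.center G : Set G))ᶜ := ha
    have hb' : b ∈ ((Subgroup.center G : Set G))ᶜ := hb
    set A : ↥((Subgroup.center G : Set G))ᶜ := ⟨a, ha'⟩
    set B : ↥((Subgroup.center G : Set G))ᶜ := ⟨b, hb'⟩
    have hAB : A ≠ B := fun h => hab (by rw [show a = b from congrArg Subtype.val h])
    have hnadj : ¬ Γ.Adj A B := fun h => hab h.2
    have hm2 : 2 ≤ m := by
      have hfAB : f A ≠ f B := fun h => hAB (f.injective h)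
      have hfst : (f A).1 ≠ (f B).1 := by
        intro h
        exact hnadj (f.map_adj_iff.1 ⟨hfAB, h⟩)
      have hv1 : ((f A).1 : ℕ) ≠ ((f B).1 : ℕ) := fun h => hfst (Fin.ext h)
      have := (f A).1.isLt
      have := (f B).1.isLt
      omega
    -- counting in mKn
    set R : Fin m → Set (Fin m × Fin s) := fun i => {p | p.1 = i} with hRdef
    have hR : ∀ i : Fin m, (R i).ncard = s := by
      intro i
      have himg : R i = (fun j : Fin s => ((i, j) : Fin m × Fin s)) '' Set.univ := by
        ext p
        simp only [hRdef, Set.mem_setOf_eq, Set.image_univ, Set.mem_range]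
        constructor
        · intro h
          exact ⟨p.2, by rw [← h]⟩
        · rintro ⟨j, rfl⟩
          rfl
      rw [himg, Set.ncard_image_of_injective _ (fun j j' h => (Prod.ext_iff.1 h).2),
        Set.ncard_univ, Nat.card_eq_fintype_card, Fintype.card_fin]
    have hNmkn : ∀ p : Fin m × Fin s, (mKn m s).neighborSet p = R p.1 \ {p} := by
      intro p
      ext q
      simp only [SimpleGraph.mem_neighborSet, hRdef, Set.mem_diff, Set.mem_setOf_eq,
        Set.mem_singleton_iff]
      constructor
      · rintro ⟨h1, h2⟩
        exact ⟨h2.symm, fun h => h1 h.symm⟩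
      · rintro ⟨h1, h2⟩
        exact ⟨fun h => h2 h.symm, h1.symm⟩
    have himgN : ∀ x : ↥((Subgroup.center G : Set G))ᶜ,
        ⇑f '' Γ.neighborSet x = (mKn m s).neighborSet (f x) := by
      intro x
      ext q
      simp only [Set.mem_image, SimpleGraph.mem_neighborSet]
      constructor
      · rintro ⟨y, hy, rfl⟩
        exact f.map_adj_iff.2 hy
      · intro hq
        refine ⟨f.symm q, ?_, by simp⟩
        have h2 : (mKn m s).Adj (f x) (f (f.symm q)) := by
          simpa using hq
        exact f.map_adj_iff.1 h2
    have hreg : ∀ x : ↥((Subgroup.center G : Set G))ᶜ, (Γ.neighborSet x).ncard = s - 1 := by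
      intro x
      rw [← Set.ncard_image_of_injective _ f.injective, himgN, hNmkn]
      have hmem : f x ∈ R (f x).1 := rfl
      rw [Set.ncard_diff_singleton_of_mem hmem, hR]
    refine ⟨m * s, s - 1, s - 2, 0, hms.symm, by omega, ?_, hreg, ?_, ?_⟩
    · have h2s : 2 * s ≤ m * s := Nat.mul_le_mul_right s hm2
      omega
    · -- lambda
      intro p q hadj
      have hfadj : (mKn m s).Adj (f p) (f q) := f.map_adj_iff.2 hadj
      obtain ⟨hfne, hffst⟩ := hfadj
      rw [← Set.ncard_image_of_injective _ f.injective,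
        Set.image_inter f.injective, himgN, himgN, hNmkn, hNmkn]
      have hsets : (R (f p).1 \ {f p}) ∩ (R (f q).1 \ {f q})
          = R (f p).1 \ {f p, f q} := by
        rw [← hffst]
        ext z
        simp only [Set.mem_inter_iff, Set.mem_diff, Set.mem_singleton_iff,
          Set.mem_insert_iff]
        tauto
      rw [hsets]
      have hsub : ({f p, f q} : Set (Fin m × Fin s)) ⊆ R (f p).1 := by
        rintro z (rfl | rfl)
        · rfl
        · exact hffst.symm
      rw [Set.ncard_diff hsub (Set.toFinite _), Set.ncard_pair hfne, hR]
    · -- mu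
      intro p q hpq hnadjpq
      have hfne : f p ≠ f q := fun h => hpq (f.injective h)
      have hffst : (f p).1 ≠ (f q).1 := by
        intro h
        exact hnadjpq (f.map_adj_iff.1 ⟨hfne, h⟩)
      rw [← Set.ncard_image_of_injective _ f.injective,
        Set.image_inter f.injective, himgN, himgN, hNmkn, hNmkn]
      have : (R (f p).1 \ {f p}) ∩ (R (f q).1 \ {f q}) = ∅ := by
        apply Set.eq_empty_iff_forall_notMem.2
        rintro z ⟨⟨h1, -⟩, ⟨h2, -⟩⟩
        exact hffst (h1.symm.trans h2)
      rw [this, Set.ncard_empty]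
end

section
/- Let G be a finite non-abelian group in which distinct elements of a common coset of Z(G) are adjacent in Γ(G) and have equal centralizers, with |Z(G)| > 1. If Γ(G) is strongly regular with parameters (v,k,λ,μ), then λ = k − 1 and μ = 0. -/
open scoped commutatorElement

open Pointwise Subgroup

theorem stmt18 (G : Type*) [Group G] [Finite G] (hna : ∃ a b : G, a * b ≠ b * a)
    (hcoset : ∀ x z₁ z₂ : G, z₁ ∈ Subgroup.center G → z₂ ∈ Subgroup.center G →
      (x * z₁) * (x * z₂) = (x * z₂) * (x * z₁) ∧
        Subgroup.centralizer {x * z₁} = Subgroup.centralizer {x * z₂})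
    (hZ : 1 < Nat.card (Subgroup.center G))
    (v k l m : ℕ)
    (h : IsSRG (commGraph G ((Subgroup.center G : Set G))ᶜ) v k l m) :
    l = k - 1 ∧ m = 0 := by
  obtain ⟨hv, hk, hkv, hdeg, hl, hm⟩ := h
  set Γ := commGraph G ((Subgroup.center G : Set G))ᶜ with hΓ
  -- key: for any non-central x, there is an adjacent vertex with equal centralizer,
  -- hence along any edge (x, x') with equal centralizers, l = k - 1.
  have key : ∀ x : ↥((Subgroup.center G : Set G))ᶜ,
      ∃ x' : ↥((Subgroup.center G : Set G))ᶜ, Γ.Adj x x' ∧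
        Γ.neighborSet x ∩ Γ.neighborSet x' = Γ.neighborSet x \ {x'} := by
    intro x
    have : Nontrivial (Subgroup.center G) := Finite.one_lt_card_iff_nontrivial.mp hZ
    obtain ⟨z, hz1⟩ := exists_ne (1 : Subgroup.center G)
    have hz : (z : G) ∈ Subgroup.center G := z.2
    have hxz : (x : G) * z ∈ ((Subgroup.center G : Set G))ᶜ := by
      intro hc
      apply x.2
      have := mul_mem hc ((Subgroup.center G).inv_mem hz)
      simpa using this
    obtain ⟨hcomm, hcent⟩ := hcoset (x : G) 1 z (one_mem _) hz
    rw [mul_one] at hcomm hcent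
    have hne : (x : G) ≠ (x : G) * z := by
      intro hc
      exact hz1 (Subtype.ext (by simpa using left_eq_mul.mp hc))
    refine ⟨⟨(x : G) * z, hxz⟩, (by rw [hΓ]; exact ⟨fun hc => hne (congrArg Subtype.val hc), hcomm⟩), ?_⟩
    have hiff : ∀ g : G, g * x = (x : G) * g ↔ g * ((x : G) * z) = (x : G) * z * g := by
      intro g
      rw [← Subgroup.mem_centralizer_singleton_iff, ← Subgroup.mem_centralizer_singleton_iff,
        hcent]
    ext y
    simp only [hΓ, Set.mem_inter_iff, SimpleGraph.mem_neighborSet, Set.mem_diff,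
      Set.mem_singleton_iff]
    constructor
    · rintro ⟨h1, h2⟩
      exact ⟨h1, fun hc => h2.1 hc.symm⟩
    · rintro ⟨h1, h2⟩
      refine ⟨h1, fun hc => h2 hc.symm, ?_⟩
      have := (hiff (y : G)).mp h1.2.symm
      exact this.symm
  have hfin : ∀ s : Set ↥((Subgroup.center G : Set G))ᶜ, s.Finite := fun s => Set.toFinite s
  have hlk : l = k - 1 := by
    obtain ⟨a, b, hab⟩ := hna
    have ha : a ∈ ((Subgroup.center G : Set G))ᶜ := fun hc =>
      hab ((Subgroup.mem_center_iff.mp hc b).symm)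
    obtain ⟨x', hadj, hset⟩ := key ⟨a, ha⟩
    have := hl _ _ hadj
    rw [hset, Set.ncard_diff_singleton_of_mem ((SimpleGraph.mem_neighborSet _ _ _).mpr hadj), hdeg] at this
    omega
  refine ⟨hlk, ?_⟩
  -- find a vertex x and nonadjacent y ≠ x
  obtain ⟨a, b, hab⟩ := hna
  have ha : a ∈ ((Subgroup.center G : Set G))ᶜ := fun hc =>
    hab ((Subgroup.mem_center_iff.mp hc b).symm)
  set x : ↥((Subgroup.center G : Set G))ᶜ := ⟨a, ha⟩
  have hcard : (insert x (Γ.neighborSet x)).ncard < (Set.univ : Set ↥((Subgroup.center G : Set G))ᶜ).ncard := by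
    rw [Set.ncard_univ, hv]
    calc (insert x (Γ.neighborSet x)).ncard ≤ (Γ.neighborSet x).ncard + 1 :=
          Set.ncard_insert_le _ _
      _ = k + 1 := by rw [hdeg]
      _ < v := hkv
  have hne : insert x (Γ.neighborSet x) ≠ Set.univ := by
    intro hc; rw [hc] at hcard; exact lt_irrefl _ hcard
  obtain ⟨y, hy⟩ := Set.ne_univ_iff_exists_notMem _ |>.mp hne
  simp only [Set.mem_insert_iff, SimpleGraph.mem_neighborSet, not_or] at hy
  have hyx : y ≠ x := hy.1
  have hnadj : ¬ Γ.Adj x y := hy.2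
  have hmm := hm x y (fun hc => hyx hc.symm) hnadj
  rw [← hmm]
  rw [Set.ncard_eq_zero (hfin _)]
  by_contra hc
  obtain ⟨w, hw1, hw2⟩ := Set.nonempty_iff_ne_empty.mpr hc
  -- w adjacent to both x and y; use the lambda = k-1 along edge (w, ?) structure
  have hwx : Γ.Adj w x := (SimpleGraph.mem_neighborSet _ _ _ |>.mp hw1).symm
  have hwy : Γ.Adj w y := (SimpleGraph.mem_neighborSet _ _ _ |>.mp hw2).symm
  -- N(w) ∩ N(x) has ncard l = k - 1 and is contained in N(w) \ {x} of the same size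
  have h1 : (Γ.neighborSet w ∩ Γ.neighborSet x).ncard = k - 1 := by
    rw [hl w x hwx]; exact hlk
  have hsub : Γ.neighborSet w ∩ Γ.neighborSet x ⊆ Γ.neighborSet w \ {x} := by
    rintro u ⟨hu1, hu2⟩
    exact ⟨hu1, fun hc => (Γ.irrefl (hc ▸ hu2 : Γ.Adj x x))⟩
  have h2 : (Γ.neighborSet w \ {x}).ncard = k - 1 := by
    rw [Set.ncard_diff_singleton_of_mem ((SimpleGraph.mem_neighborSet _ _ _).mpr hwx), hdeg]
  have heq : Γ.neighborSet w ∩ Γ.neighborSet x = Γ.neighborSet w \ {x} :=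
    Set.eq_of_subset_of_ncard_le hsub (by rw [h1, h2]) (hfin _)
  have hyin : y ∈ Γ.neighborSet w \ {x} := ⟨hwy, hyx⟩
  rw [← heq] at hyin
  exact hnadj hyin.2
end
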